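/- arXiv:0909.2622 — 6 statements merged into one kernel-verified Lean document; each statement's English description precedes it below -/
import Mathlib

section
/- Assume S_R − S_E has a positive eigenvalue but is not positive definite. Then every Q ∈ Ω satisfying Q Θ(Q) = Tr(Q Θ(Q)) · Q and λ_max(Θ(Q)) = Tr(Q Θ(Q)) (in particular, every global maximizer of the secrecy rate over Ω) has rank strictly less than n_T. -/
open Matrix
open scoped ComplexOrder

/-- The largest eigenvalue of a (Hermitian) complex matrix, expressed as the
supremum of its real eigenvalues. -/
noncomputable def lamMax {n : ℕ} (A : Matrix (Fin n) (Fin n) ℂ) : ℝ :=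
  sSup {t : ℝ | ∃ v : Fin n → ℂ, v ≠ 0 ∧ A *ᵥ v = (t : ℂ) • v}

lemma myPosDefConj {n : ℕ} {A : Matrix (Fin n) (Fin n) ℂ} (hA : A.PosDef)
    (B : Matrix (Fin n) (Fin n) ℂ) (hB : IsUnit B.det) : (Bᴴ * A * B).PosDef := by
  refine PosDef.of_dotProduct_mulVec_pos (isHermitian_conjTranspose_mul_mul B hA.1) (fun x hx => ?_)
  have hinj : Function.Injective B.mulVec :=
    mulVec_injective_iff_isUnit.mpr ((isUnit_iff_isUnit_det _).mpr hB)
  have hBx : B *ᵥ x ≠ 0 := fun h => hx (hinj (by rw [h, mulVec_zero]))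
  simpa only [star_mulVec, dotProduct_mulVec, vecMul_vecMul] using hA.dotProduct_mulVec_pos hBx

lemma myPosDefOfEig {n : ℕ} {A : Matrix (Fin n) (Fin n) ℂ}
    (hA : A.IsHermitian) (h : ∀ i, 0 < hA.eigenvalues i) : A.PosDef := by
  have hD : (diagonal (RCLike.ofReal ∘ hA.eigenvalues) : Matrix (Fin n) (Fin n) ℂ).PosDef := by
    rw [posDef_diagonal_iff]
    intro i
    simpa using (by exact_mod_cast h i : (0:ℂ) < ((hA.eigenvalues i : ℝ) : ℂ))
  set U : Matrix (Fin n) (Fin n) ℂ := (hA.eigenvectorUnitary : Matrix (Fin n) (Fin n) ℂ) with hU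
  have hUdet : IsUnit (star U).det :=
    isUnit_det_of_left_inverse (B := U)
      ((Matrix.mem_unitaryGroup_iff).mp (hA.eigenvectorUnitary).2)
  have := myPosDefConj hD (star U) hUdet
  have h2 : (star U)ᴴ = U := by simp [star_eq_conjTranspose]
  rw [h2] at this
  rw [hA.spectral_theorem]
  exact this

lemma myKeyPosDef {n : ℕ} (γ : ℝ) (hγ : 0 < γ) {P₁ P₂ H : Matrix (Fin n) (Fin n) ℂ}
    (hP₁ : P₁.PosDef) (hP₂ : P₂.PosDef) (hH : H.IsHermitian)
    (heq : H = (γ:ℂ) • (P₁ * P₂)) : H.PosDef := by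
  apply myPosDefOfEig hH
  intro i
  set w : Fin n → ℂ := ⇑(hH.eigenvectorBasis i) with hwdef
  have hw0 : w ≠ 0 := by
    intro h
    exact hH.eigenvectorBasis.orthonormal.ne_zero i (by ext1 j; exact congrFun h j)
  set lam : ℝ := hH.eigenvalues i with hlam
  have hmv : H *ᵥ w = (lam : ℂ) • w := by
    have := hH.mulVec_eigenvectorBasis i
    rw [this]
    ext1 j
    simp only [Pi.smul_apply, smul_eq_mul, Complex.real_smul]
    rfl
  have hd2 : 0 < star w ⬝ᵥ P₂ *ᵥ w := hP₂.dotProduct_mulVec_pos hw0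
  have hP₂w : P₂ *ᵥ w ≠ 0 := by
    intro h
    have hinj : Function.Injective P₂.mulVec :=
      mulVec_injective_iff_isUnit.mpr hP₂.isUnit
    exact hw0 (hinj (by rw [h, mulVec_zero]))
  have hd1 : 0 < star (P₂ *ᵥ w) ⬝ᵥ P₁ *ᵥ (P₂ *ᵥ w) := hP₁.dotProduct_mulVec_pos hP₂w
  have hherm2 : star w ⬝ᵥ P₂ *ᵥ (P₁ *ᵥ (P₂ *ᵥ w)) = star (P₂ *ᵥ w) ⬝ᵥ P₁ *ᵥ (P₂ *ᵥ w) := by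
    rw [show star (P₂ *ᵥ w) = star w ᵥ* P₂ by rw [star_mulVec, hP₂.isHermitian.eq],
      ← dotProduct_mulVec]
  have hchain : (lam : ℂ) * (star w ⬝ᵥ P₂ *ᵥ w)
      = (γ : ℂ) * (star (P₂ *ᵥ w) ⬝ᵥ P₁ *ᵥ (P₂ *ᵥ w)) := by
    have h1 : star w ⬝ᵥ P₂ *ᵥ (H *ᵥ w) = (lam:ℂ) * (star w ⬝ᵥ P₂ *ᵥ w) := by
      rw [hmv, mulVec_smul, dotProduct_smul, smul_eq_mul]
    have h2 : star w ⬝ᵥ P₂ *ᵥ (H *ᵥ w) = (γ:ℂ) * (star (P₂ *ᵥ w) ⬝ᵥ P₁ *ᵥ (P₂ *ᵥ w)) := by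
      rw [heq, smul_mulVec, mulVec_smul, dotProduct_smul, smul_eq_mul, ← mulVec_mulVec,
        hherm2]
    rw [← h1, h2]
  -- pass to real parts
  have hd2re : 0 < (star w ⬝ᵥ P₂ *ᵥ w).re ∧ (star w ⬝ᵥ P₂ *ᵥ w).im = 0 := by
    have := hd2
    rw [Complex.lt_def] at this
    exact ⟨by simpa using this.1, by simpa using this.2.symm⟩
  have hd1re : 0 < (star (P₂ *ᵥ w) ⬝ᵥ P₁ *ᵥ (P₂ *ᵥ w)).re ∧
      (star (P₂ *ᵥ w) ⬝ᵥ P₁ *ᵥ (P₂ *ᵥ w)).im = 0 := by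
    have := hd1
    rw [Complex.lt_def] at this
    exact ⟨by simpa using this.1, by simpa using this.2.symm⟩
  have hre := congrArg Complex.re hchain
  rw [Complex.mul_re, Complex.mul_re] at hre
  simp only [Complex.ofReal_re, Complex.ofReal_im, zero_mul, sub_zero, hd2re.2, hd1re.2,
    mul_zero] at hre
  -- hre : lam * re d2 = γ * re d1
  nlinarith [hd2re.1, hd1re.1, mul_pos hγ hd1re.1]

/-- If `S_R − S_E` has a positive eigenvalue but is not positive
definite, then every `Q ∈ Ω` satisfying the optimality equations
`Q Θ(Q) = Tr(Q Θ(Q)) Q`, `λ_max(Θ(Q)) = Tr(Q Θ(Q))` has rank strictly less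
than `n_T`. -/
theorem stmt_12 (nT nR nE : ℕ) (HR : Matrix (Fin nR) (Fin nT) ℂ)
    (HE : Matrix (Fin nE) (Fin nT) ℂ) (ρ : ℝ) (hρ : 0 < ρ)
    (SR SE Θ : Matrix (Fin nT) (Fin nT) ℂ)
    (hSR : SR = (ρ : ℂ) • (HRᴴ * HR)) (hSE : SE = (ρ : ℂ) • (HEᴴ * HE))
    (hpos : ∃ (t : ℝ) (v : Fin nT → ℂ), 0 < t ∧ v ≠ 0 ∧
      (SR - SE) *ᵥ v = (t : ℂ) • v)
    (hnpd : ¬ (SR - SE).PosDef)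
    (Q : Matrix (Fin nT) (Fin nT) ℂ) (hQ : Q.PosSemidef) (htr : Q.trace = 1)
    (hΘ : Θ = SR * (1 + Q * SR)⁻¹ - SE * (1 + Q * SE)⁻¹)
    (heq1 : Q * Θ = (Q * Θ).trace • Q)
    (heq2 : lamMax Θ = (Q * Θ).trace.re) :
    Q.rank < nT := by
  by_contra hrank
  push_neg at hrank
  obtain ⟨t, v, ht, hv, hvEq⟩ := hpos
  have hn : 0 < nT := by
    rcases Nat.eq_zero_or_pos nT with h0 | h
    · subst h0; exact absurd (Subsingleton.elim v 0) hv
    · exact h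
  -- Q is invertible
  have hdet : IsUnit Q.det := by
    rw [isUnit_iff_ne_zero]
    intro h0
    obtain ⟨u, hu0, hu⟩ := (Matrix.exists_mulVec_eq_zero_iff).mpr h0
    have hker : 0 < Module.finrank ℂ (LinearMap.ker Q.mulVecLin) := by
      apply Module.finrank_pos_iff.mpr
      refine nontrivial_of_ne ⟨u, ?_⟩ 0 ?_
      · simpa [Matrix.mulVecLin] using hu
      · simp only [ne_eq, Submodule.mk_eq_zero]
        exact hu0
    have hrn := LinearMap.finrank_range_add_finrank_ker Q.mulVecLin
    rw [Module.finrank_fin_fun] at hrn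
    have hq : Q.rank = Module.finrank ℂ (LinearMap.range Q.mulVecLin) := rfl
    omega
  have hQinj : Function.Injective Q.mulVec :=
    mulVec_injective_iff_isUnit.mpr ((isUnit_iff_isUnit_det _).mpr hdet)
  have hQpd : Q.PosDef := by
    refine PosDef.of_dotProduct_mulVec_pos hQ.1 fun x hx => lt_of_le_of_ne (hQ.dotProduct_mulVec_nonneg x) fun h => hx ?_
    have h2 := (hQ.dotProduct_mulVec_zero_iff x).mp h.symm
    exact hQinj (by rw [h2, mulVec_zero])
  set c := (Q * Θ).trace with hc
  have hΘc : Θ = c • (1 : Matrix (Fin nT) (Fin nT) ℂ) := by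
    have h1 : Q⁻¹ * (Q * Θ) = Q⁻¹ * (c • Q) := by rw [heq1]
    rwa [← Matrix.mul_assoc, nonsing_inv_mul Q hdet, Matrix.one_mul, mul_smul_comm,
      nonsing_inv_mul Q hdet] at h1
  -- SR SE psd
  have psd_smul : ∀ (A : Matrix (Fin nT) (Fin nT) ℂ), A.PosSemidef →
      ((ρ:ℂ) • A).PosSemidef := by
    intro A hA
    refine PosSemidef.of_dotProduct_mulVec_nonneg ?_ fun x => ?_
    · show ((ρ:ℂ) • A)ᴴ = _
      rw [conjTranspose_smul, hA.1.eq, Complex.star_def, Complex.conj_ofReal]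
    · rw [smul_mulVec, dotProduct_smul, smul_eq_mul]
      exact mul_nonneg (by exact_mod_cast le_of_lt (show (0:ℝ) < ρ from hρ) : (0:ℂ) ≤ (ρ:ℂ)) (hA.dotProduct_mulVec_nonneg x)
  have hSRpsd : SR.PosSemidef := by
    rw [hSR]; exact psd_smul _ (posSemidef_conjTranspose_mul_self HR)
  have hSEpsd : SE.PosSemidef := by
    rw [hSE]; exact psd_smul _ (posSemidef_conjTranspose_mul_self HE)
  have hSRh := hSRpsd.1
  have hSEh := hSEpsd.1
  set U := 1 + Q * SR with hUdef
  set V := 1 + Q * SE with hVdef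
  have hQQ : Q * Q⁻¹ = 1 := mul_nonsing_inv Q hdet
  have hZ : (Q⁻¹ + SR).PosDef := hQpd.inv.add_posSemidef hSRpsd
  have hW : (Q⁻¹ + SE).PosDef := hQpd.inv.add_posSemidef hSEpsd
  have hUfac : U = Q * (Q⁻¹ + SR) := by rw [hUdef, Matrix.mul_add, hQQ]
  have hVfac : V = Q * (Q⁻¹ + SE) := by rw [hVdef, Matrix.mul_add, hQQ]
  have hUdet : IsUnit U.det := by
    rw [hUfac, det_mul]; exact hdet.mul ((isUnit_iff_isUnit_det _).mp hZ.isUnit)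
  have hVdet : IsUnit V.det := by
    rw [hVfac, det_mul]; exact hdet.mul ((isUnit_iff_isUnit_det _).mp hW.isUnit)
  have hUH : Uᴴ = 1 + SR * Q := by
    rw [hUdef, conjTranspose_add, conjTranspose_one, conjTranspose_mul, hSRh.eq, hQ.1.eq]
  have hcomm : Uᴴ * SR = SR * U := by rw [hUH, hUdef]; noncomm_ring
  have hUUinv : U * U⁻¹ = 1 := mul_nonsing_inv U hUdet
  have hVinvV : V⁻¹ * V = 1 := nonsing_inv_mul V hVdet
  have hUSR : Uᴴ * (SR * U⁻¹) = SR := by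
    rw [← Matrix.mul_assoc, hcomm, Matrix.mul_assoc, hUUinv, Matrix.mul_one]
  have h1 : c • (1 : Matrix (Fin nT) (Fin nT) ℂ) = SR * U⁻¹ - SE * V⁻¹ := by
    rw [← hΘc, hΘ]
  have hM : SR - SE = c • (Uᴴ * V) := by
    have step : Uᴴ * (c • (1 : Matrix (Fin nT) (Fin nT) ℂ)) * V = SR - SE := by
      rw [h1, Matrix.mul_sub, Matrix.sub_mul, hUSR, Matrix.mul_assoc Uᴴ (SE * V⁻¹) V,
        Matrix.mul_assoc SE V⁻¹ V, hVinvV, Matrix.mul_one, hUH, hVdef]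
      noncomm_ring
    rw [← step, mul_smul_comm, smul_mul_assoc, Matrix.mul_one]
  -- c is real
  have hUHdet : IsUnit (Uᴴ).det := by
    rw [det_conjTranspose]; exact hUdet.star
  have hSRUinv : (SR * U⁻¹)ᴴ = SR * U⁻¹ := by
    rw [conjTranspose_mul, conjTranspose_nonsing_inv, hSRh.eq]
    calc (Uᴴ)⁻¹ * SR = (Uᴴ)⁻¹ * (Uᴴ * (SR * U⁻¹)) := by rw [hUSR]
      _ = SR * U⁻¹ := by rw [← Matrix.mul_assoc, nonsing_inv_mul _ hUHdet, Matrix.one_mul]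
  have hVHdet : IsUnit (Vᴴ).det := by
    rw [det_conjTranspose]; exact hVdet.star
  have hVH : Vᴴ = 1 + SE * Q := by
    rw [hVdef, conjTranspose_add, conjTranspose_one, conjTranspose_mul, hSEh.eq, hQ.1.eq]
  have hcommE : Vᴴ * SE = SE * V := by rw [hVH, hVdef]; noncomm_ring
  have hVSE : Vᴴ * (SE * V⁻¹) = SE := by
    rw [← Matrix.mul_assoc, hcommE, Matrix.mul_assoc, mul_nonsing_inv V hVdet, Matrix.mul_one]
  have hSEVinv : (SE * V⁻¹)ᴴ = SE * V⁻¹ := by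
    rw [conjTranspose_mul, conjTranspose_nonsing_inv, hSEh.eq]
    calc (Vᴴ)⁻¹ * SE = (Vᴴ)⁻¹ * (Vᴴ * (SE * V⁻¹)) := by rw [hVSE]
      _ = SE * V⁻¹ := by rw [← Matrix.mul_assoc, nonsing_inv_mul _ hVHdet, Matrix.one_mul]
  have hcreal : (starRingEnd ℂ) c = c := by
    have hconj := congrArg conjTranspose h1
    rw [conjTranspose_sub, hSRUinv, hSEVinv, ← h1, conjTranspose_smul, conjTranspose_one] at hconj
    have hent := congrFun (congrFun hconj ⟨0, hn⟩) ⟨0, hn⟩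
    simpa using hent
  obtain ⟨γ, hγ⟩ : ∃ γ : ℝ, c = (γ : ℂ) := ⟨c.re, (Complex.conj_eq_iff_re.mp hcreal).symm⟩
  -- the P matrices
  set P₁ := Q + Q * SR * Q with hP₁def
  set P₂ := Q + Q * SE * Q with hP₂def
  have hP₁pd : P₁.PosDef := by
    refine hQpd.add_posSemidef ?_
    have := hSRpsd.conjTranspose_mul_mul_same Q
    rwa [hQ.1.eq] at this
  have hP₂pd : P₂.PosDef := by
    refine hQpd.add_posSemidef ?_
    have := hSEpsd.conjTranspose_mul_mul_same Q
    rwa [hQ.1.eq] at this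
  have hHfac : Q * (SR - SE) * Q = c • (P₁ * P₂) := by
    rw [hM, mul_smul_comm, smul_mul_assoc]
    congr 1
    rw [hUH, hVdef, hP₁def, hP₂def]
    noncomm_ring
  have hHherm : (Q * (SR - SE) * Q).IsHermitian := by
    have hsub : (SR - SE).IsHermitian := hSRh.sub hSEh
    have := isHermitian_conjTranspose_mul_mul Q hsub
    rwa [hQ.1.eq] at this
  have hQinv_herm : (Q⁻¹)ᴴ = Q⁻¹ := by rw [conjTranspose_nonsing_inv, hQ.1.eq]
  have hback : Q⁻¹ * (Q * (SR - SE) * Q) * Q⁻¹ = SR - SE := by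
    rw [← Matrix.mul_assoc, ← Matrix.mul_assoc, nonsing_inv_mul Q hdet, Matrix.one_mul,
      Matrix.mul_assoc, hQQ, Matrix.mul_one]
  have hvform : star v ⬝ᵥ (SR - SE) *ᵥ v = (t : ℂ) * (star v ⬝ᵥ v) := by
    rw [hvEq, dotProduct_smul, smul_eq_mul]
  have hvv : 0 < star v ⬝ᵥ v := by
    rw [dotProduct_star_self_pos_iff]
    exact hv
  rcases lt_trichotomy γ 0 with hγ0 | hγ0 | hγ0
  · -- γ < 0 : -(SR - SE) posdef, contradict positive eigenvalue
    have hnegfac : -(Q * (SR - SE) * Q) = ((-γ : ℝ) : ℂ) • (P₁ * P₂) := by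
      rw [hHfac, hγ]; push_cast; rw [← neg_smul]
    have hHpd := myKeyPosDef (-γ) (by linarith) hP₁pd hP₂pd hHherm.neg hnegfac
    have hconj := myPosDefConj hHpd Q⁻¹ (isUnit_nonsing_inv_det Q hdet)
    rw [hQinv_herm, Matrix.mul_neg, Matrix.neg_mul, hback] at hconj
    have := hconj.dotProduct_mulVec_pos hv
    rw [neg_mulVec, dotProduct_neg, hvform] at this
    have ht' : 0 < (t : ℂ) := by exact_mod_cast ht
    have hpos2 : 0 < (t : ℂ) * (star v ⬝ᵥ v) := mul_pos ht' hvv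
    exact (lt_asymm (neg_pos.mp this)) hpos2
  · -- γ = 0 : SR - SE = 0
    have hczero : c = 0 := by rw [hγ, hγ0]; simp
    rw [hczero, zero_smul] at hM
    rw [hM, Matrix.zero_mulVec] at hvEq
    have : (t : ℂ) = 0 ∨ v = 0 := smul_eq_zero.mp hvEq.symm
    rcases this with h | h
    · exact ht.ne' (by exact_mod_cast h)
    · exact hv h
  · -- γ > 0 : SR - SE posdef, contradict hnpd
    have hfac : Q * (SR - SE) * Q = ((γ : ℝ) : ℂ) • (P₁ * P₂) := by rw [hHfac, hγ]
    have hHpd := myKeyPosDef γ hγ0 hP₁pd hP₂pd hHherm hfac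
    have hconj := myPosDefConj hHpd Q⁻¹ (isUnit_nonsing_inv_det Q hdet)
    rw [hQinv_herm, hback] at hconj
    exact hnpd hconj
end

section
/- Let Q be a nonzero n_T×n_T Hermitian positive semidefinite matrix, let γ be a real number such that K := Θ(Q) + γ I is Hermitian positive definite, and suppose Q K = (1/2)(Tr(Q) + 1/Tr(Q)) · λ_max(K) · Q. Then Tr(Q) = 1, λ_max(K) = Tr(Q K), and consequently Q Θ(Q) = Tr(Q Θ(Q)) · Q and λ_max(Θ(Q)) = Tr(Q Θ(Q)). -/
open Matrix
open scoped ComplexOrder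

lemma spec_set_eq {n : ℕ} {A : Matrix (Fin n) (Fin n) ℂ} (hA : A.IsHermitian) :
    {t : ℝ | ∃ v : Fin n → ℂ, v ≠ 0 ∧ A *ᵥ v = (t : ℂ) • v} = Set.range hA.eigenvalues := by
  ext t
  constructor
  · rintro ⟨v, hv, hAv⟩
    set U : Matrix (Fin n) (Fin n) ℂ := (hA.eigenvectorUnitary : Matrix (Fin n) (Fin n) ℂ) with hU
    have hUU : star U * U = 1 := Unitary.coe_star_mul_self hA.eigenvectorUnitary
    have hUU' : U * star U = 1 := Unitary.coe_mul_star_self hA.eigenvectorUnitary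
    set w : Fin n → ℂ := star U *ᵥ v with hwdef
    have hwne : w ≠ 0 := by
      intro h
      apply hv
      have : U *ᵥ w = v := by
        rw [hwdef, mulVec_mulVec, hUU', one_mulVec]
      rw [← this, h, mulVec_zero]
    have hdiag : star U * A = diagonal ((↑) ∘ hA.eigenvalues) * star U := by
      conv_lhs => rw [hA.spectral_theorem, Unitary.conjStarAlgAut_apply]
      rw [← mul_assoc, ← mul_assoc, hUU, one_mul]
      rfl
    have hDw : diagonal ((↑) ∘ hA.eigenvalues) *ᵥ w = (t : ℂ) • w := by
      rw [hwdef, mulVec_mulVec, ← hdiag, ← mulVec_mulVec, hAv, mulVec_smul]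
    obtain ⟨i, hi⟩ := Function.ne_iff.mp hwne
    have := congrFun hDw i
    rw [mulVec_diagonal] at this
    have ht : (hA.eigenvalues i : ℂ) = t := by
      simp only [Function.comp_apply, Pi.smul_apply, smul_eq_mul] at this
      exact mul_right_cancel₀ (by simpa using hi) this
    exact ⟨i, Complex.ofReal_injective ht⟩
  · rintro ⟨i, rfl⟩
    refine ⟨⇑(hA.eigenvectorBasis i), ?_, ?_⟩
    · intro h
      exact hA.eigenvectorBasis.orthonormal.ne_zero i (by ext j; exact congrFun h j)
    · have := hA.mulVec_eigenvectorBasis i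
      rw [this]
      ext j
      simp [Complex.real_smul]

lemma spec_finite {n : ℕ} {A : Matrix (Fin n) (Fin n) ℂ} (hA : A.IsHermitian) :
    {t : ℝ | ∃ v : Fin n → ℂ, v ≠ 0 ∧ A *ᵥ v = (t : ℂ) • v}.Finite := by
  rw [spec_set_eq hA]; exact Set.finite_range _

lemma le_lamMax {n : ℕ} {A : Matrix (Fin n) (Fin n) ℂ} (hA : A.IsHermitian) {t : ℝ}
    (ht : ∃ v : Fin n → ℂ, v ≠ 0 ∧ A *ᵥ v = (t : ℂ) • v) : t ≤ lamMax A :=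
  le_csSup (spec_finite hA).bddAbove ht

lemma lamMax_mem {n : ℕ} {A : Matrix (Fin n) (Fin n) ℂ} (hA : A.IsHermitian)
    (hne : {t : ℝ | ∃ v : Fin n → ℂ, v ≠ 0 ∧ A *ᵥ v = (t : ℂ) • v}.Nonempty) :
    ∃ v : Fin n → ℂ, v ≠ 0 ∧ A *ᵥ v = (lamMax A : ℂ) • v :=
  hne.csSup_mem (spec_finite hA)

lemma star_dot_pos {n : ℕ} {v : Fin n → ℂ} (hv : v ≠ 0) :
    ∃ s : ℝ, 0 < s ∧ star v ⬝ᵥ v = (s : ℂ) := by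
  refine ⟨∑ i, Complex.normSq (v i), ?_, ?_⟩
  · obtain ⟨i, hi⟩ := Function.ne_iff.mp hv
    exact Finset.sum_pos' (fun j _ => Complex.normSq_nonneg _)
      ⟨i, Finset.mem_univ i, Complex.normSq_pos.mpr (by simpa using hi)⟩
  · push_cast
    simp [dotProduct, Complex.normSq_eq_conj_mul_self, mul_comm]

open scoped MatrixOrder in
lemma psd_eq_ct {n : ℕ} {Q : Matrix (Fin n) (Fin n) ℂ} (hQ : Q.PosSemidef) :
    ∃ B : Matrix (Fin n) (Fin n) ℂ, Q = Bᴴ * B := by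
  obtain ⟨X, hX, -, rfl⟩ :=
    CFC.exists_sqrt_of_isSelfAdjoint_of_quasispectrumRestricts hQ.isHermitian
      (QuasispectrumRestricts.nnreal_of_nonneg hQ.nonneg)
  exact ⟨X, by rw [← star_eq_conjTranspose, hX.star_eq]⟩

/-- Let `Q` be a nonzero Hermitian PSD matrix, `γ` real with
`K = Θ(Q) + γI` positive definite, and suppose
`Q K = (1/2)(Tr(Q) + 1/Tr(Q)) λ_max(K) Q`. Then `Tr(Q) = 1`,
`λ_max(K) = Tr(Q K)`, and consequently `Q Θ(Q) = Tr(Q Θ(Q)) Q` and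
`λ_max(Θ(Q)) = Tr(Q Θ(Q))`. Here `S_R = ρ H_R†H_R`, `S_E = ρ H_E†H_E` and
`Θ(Q) = S_R(I+QS_R)⁻¹ − S_E(I+QS_E)⁻¹`. -/
theorem stmt_13 (nT nR nE : ℕ) (HR : Matrix (Fin nR) (Fin nT) ℂ)
    (HE : Matrix (Fin nE) (Fin nT) ℂ) (ρ : ℝ) (hρ : 0 < ρ)
    (SR SE Θ K : Matrix (Fin nT) (Fin nT) ℂ)
    (hSR : SR = (ρ : ℂ) • (HRᴴ * HR)) (hSE : SE = (ρ : ℂ) • (HEᴴ * HE))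
    (Q : Matrix (Fin nT) (Fin nT) ℂ) (hQ : Q.PosSemidef) (hQne : Q ≠ 0)
    (hΘ : Θ = SR * (1 + Q * SR)⁻¹ - SE * (1 + Q * SE)⁻¹)
    (γ : ℝ) (hK : K = Θ + (γ : ℂ) • 1) (hKpd : K.PosDef)
    (heq : Q * K = ((((Q.trace.re + (Q.trace.re)⁻¹) / 2) * lamMax K : ℝ) : ℂ) • Q) :
    Q.trace = 1 ∧ lamMax K = (Q * K).trace.re ∧
    Q * Θ = (Q * Θ).trace • Q ∧ lamMax Θ = (Q * Θ).trace.re := by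
  -- trace of Q is a positive real
  obtain ⟨B, hB⟩ := psd_eq_ct hQ
  have hBne : B ≠ 0 := fun h => hQne (by simp [hB, h])
  set t0 : ℝ := ∑ j, ∑ i, Complex.normSq (B i j) with ht0def
  have htrQ : Q.trace = (t0 : ℂ) := by
    rw [hB, Matrix.trace, ht0def]
    push_cast
    simp [Matrix.diag, Matrix.mul_apply, Matrix.conjTranspose_apply,
      Complex.normSq_eq_conj_mul_self]
  have ht0pos : 0 < t0 := by
    obtain ⟨i, hi⟩ := Function.ne_iff.mp hBne
    obtain ⟨j, hj⟩ := Function.ne_iff.mp hi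
    refine Finset.sum_pos' (fun a _ => Finset.sum_nonneg fun b _ => Complex.normSq_nonneg _)
      ⟨j, Finset.mem_univ j, Finset.sum_pos' (fun b _ => Complex.normSq_nonneg _)
        ⟨i, Finset.mem_univ i, Complex.normSq_pos.mpr (by simpa using hj)⟩⟩
  have htre : Q.trace.re = t0 := by rw [htrQ]; simp
  set L : ℝ := lamMax K with hLdef
  set α : ℝ := (t0 + t0⁻¹) / 2 * L with hαdef
  have heq' : Q * K = (α : ℂ) • Q := by rw [heq, htre]
  -- K * Q = α • Q
  have hKQ : K * Q = (α : ℂ) • Q := by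
    have h := congrArg conjTranspose heq'
    rwa [conjTranspose_mul, conjTranspose_smul, Complex.star_def, Complex.conj_ofReal,
      hKpd.isHermitian.eq, hQ.isHermitian.eq] at h
  -- a nonzero column of Q is an eigenvector of K with eigenvalue α
  obtain ⟨i0, hi0⟩ := Function.ne_iff.mp hQne
  obtain ⟨j0, hj0⟩ := Function.ne_iff.mp hi0
  have hcol : ∃ v : Fin nT → ℂ, v ≠ 0 ∧ K *ᵥ v = (α : ℂ) • v := by
    refine ⟨fun i => Q i j0, fun h => hj0 (congrFun h i0), ?_⟩
    ext i
    have := congrFun (congrFun hKQ i) j0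
    simpa [Matrix.mul_apply, Matrix.mulVec, dotProduct] using this
  have hαle : α ≤ L := le_lamMax hKpd.isHermitian hcol
  -- lamMax K is positive
  obtain ⟨v0, hv0ne, hv0⟩ := lamMax_mem hKpd.isHermitian ⟨α, hcol⟩
  have hLpos : 0 < L := by
    have hpd := hKpd.dotProduct_mulVec_pos hv0ne
    obtain ⟨s, hs, hsv⟩ := star_dot_pos hv0ne
    rw [hv0, dotProduct_smul, hsv] at hpd
    have : (0 : ℂ) < ((L * s : ℝ) : ℂ) := by push_cast; simpa using hpd
    rw [Complex.zero_lt_real] at this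
    nlinarith
  -- t0 = 1
  have ht01 : t0 = 1 := by
    have h2 : (t0 + t0⁻¹) / 2 ≤ 1 := by
      by_contra h
      push_neg at h
      have : L < α := by
        rw [hαdef]
        nlinarith
      linarith
    have hinv : t0 * t0⁻¹ = 1 := mul_inv_cancel₀ ht0pos.ne'
    nlinarith [sq_nonneg (t0 - 1)]
  have htrQ1 : Q.trace = 1 := by rw [htrQ, ht01]; norm_num
  have hα : α = L := by rw [hαdef, ht01]; norm_num
  -- trace of Q * K
  have htrQK : (Q * K).trace = (L : ℂ) := by
    rw [heq', trace_smul, htrQ1, hα]; simp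
  -- Q * Θ
  have hΘeq : Θ = K - (γ : ℂ) • 1 := by rw [hK, add_sub_cancel_right]
  have hQΘ : Q * Θ = ((L - γ : ℝ) : ℂ) • Q := by
    rw [hΘeq, Matrix.mul_sub, Matrix.mul_smul, Matrix.mul_one, heq', hα]
    push_cast
    rw [sub_smul]
  have htrQΘ : (Q * Θ).trace = ((L - γ : ℝ) : ℂ) := by
    rw [hQΘ, trace_smul, htrQ1]; simp
  -- Θ is Hermitian
  have hΘherm : Θ.IsHermitian := by
    rw [hΘeq]
    exact (hKpd.isHermitian.sub (by simp [Matrix.IsHermitian, Complex.star_def]))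
  -- lamMax Θ = L - γ
  have hshift : ∀ (s : ℝ) (v : Fin nT → ℂ), (Θ *ᵥ v = (s : ℂ) • v ↔ K *ᵥ v = ((s + γ : ℝ) : ℂ) • v) := by
    intro s v
    rw [hΘeq, Matrix.sub_mulVec, Matrix.smul_mulVec, Matrix.one_mulVec]
    constructor
    · intro h
      have := congrArg (· + (γ : ℂ) • v) h
      simpa [sub_add_cancel, push_cast, add_smul] using this
    · intro h
      rw [sub_eq_iff_eq_add, h]
      push_cast
      rw [add_smul]
  have hmemΘ : Θ *ᵥ v0 = ((L - γ : ℝ) : ℂ) • v0 := by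
    rw [hshift]
    simpa using hv0
  have hle1 : L - γ ≤ lamMax Θ := le_lamMax hΘherm ⟨v0, hv0ne, hmemΘ⟩
  have hle2 : lamMax Θ ≤ L - γ := by
    obtain ⟨w, hwne, hw⟩ := lamMax_mem hΘherm ⟨L - γ, v0, hv0ne, hmemΘ⟩
    have : lamMax Θ + γ ≤ L := le_lamMax hKpd.isHermitian ⟨w, hwne, (hshift _ w).mp hw⟩
    linarith
  have hlamΘ : lamMax Θ = L - γ := le_antisymm hle2 hle1
  refine ⟨htrQ1, ?_, ?_, ?_⟩
  · rw [htrQK]; simp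
  · rw [htrQΘ]; exact hQΘ
  · rw [hlamΘ, htrQΘ]; simp
end

section
/- Let n_T = 2 and suppose the Hermitian 2×2 matrix H_R†H_R − H_E†H_E has a positive eigenvalue but is not positive definite. Then sup_{Q ∈ Ω} C_s(Q) = log λ_max(M), where M = (I + ρ H_E†H_E)^{-1/2}(I + ρ H_R†H_R)(I + ρ H_E†H_E)^{-1/2} is Hermitian positive definite, and the supremum is attained at a rank-one matrix Q = u u† for some unit vector u ∈ ℂ². -/
open Matrix
open scoped ComplexOrder

/-- The positive semidefinite square root of a positive semidefinite matrix
(the definition `Matrix.PosSemidef.sqrt` of the older Mathlib, since removed). -/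
noncomputable def Matrix.PosSemidef.sqrt {n : Type*} [Fintype n] [DecidableEq n]
    {A : Matrix n n ℂ} (hA : A.PosSemidef) : Matrix n n ℂ :=
  (hA.1.eigenvectorUnitary : Matrix n n ℂ) * diagonal ((↑) ∘ (Real.sqrt ·) ∘ hA.1.eigenvalues) *
    (star (hA.1.eigenvectorUnitary : Matrix n n ℂ))

lemma Matrix.PosSemidef.sqrt_mul_self {n : Type*} [Fintype n] [DecidableEq n]
    {A : Matrix n n ℂ} (hA : A.PosSemidef) : hA.sqrt * hA.sqrt = A := by
  have hU : star (hA.1.eigenvectorUnitary : Matrix n n ℂ) * (hA.1.eigenvectorUnitary : Matrix n n ℂ) = 1 :=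
    Matrix.mem_unitaryGroup_iff'.mp hA.1.eigenvectorUnitary.2
  conv_rhs => rw [hA.1.spectral_theorem, Unitary.conjStarAlgAut_apply]
  unfold Matrix.PosSemidef.sqrt
  set U : Matrix n n ℂ := (hA.1.eigenvectorUnitary : Matrix n n ℂ)
  set D : Matrix n n ℂ := diagonal ((↑) ∘ (Real.sqrt ·) ∘ hA.1.eigenvalues)
  rw [show U * D * star U * (U * D * star U) = U * D * (star U * U) * D * star U by
    simp only [mul_assoc], hU, mul_one, mul_assoc U D D, diagonal_mul_diagonal]
  congr 3
  funext i
  simp only [Function.comp_apply]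
  rw [← Complex.ofReal_mul, Real.mul_self_sqrt (hA.eigenvalues_nonneg i)]
  rfl

lemma Matrix.PosSemidef.posSemidef_sqrt {n : Type*} [Fintype n] [DecidableEq n]
    {A : Matrix n n ℂ} (hA : A.PosSemidef) : hA.sqrt.PosSemidef := by
  unfold Matrix.PosSemidef.sqrt
  rw [Matrix.star_eq_conjTranspose]
  refine (Matrix.PosSemidef.diagonal fun i => ?_).mul_mul_conjTranspose_same _
  simp only [Function.comp_apply, Pi.zero_apply]
  exact Complex.zero_le_real.mpr (Real.sqrt_nonneg _)

namespace S14
variable {k : Type*} [Fintype k] [DecidableEq k]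

omit [DecidableEq k] in
lemma herm_dot_shift {S : Matrix k k ℂ} (hS : S.IsHermitian)
    (x z : k → ℂ) : star x ⬝ᵥ (S *ᵥ z) = star (S *ᵥ x) ⬝ᵥ z := by
  rw [star_mulVec, hS.eq, ← dotProduct_mulVec]

omit [DecidableEq k] in
lemma dot_pos {v : k → ℂ} (hv : v ≠ 0) : 0 < star v ⬝ᵥ v :=
  lt_of_le_of_ne (dotProduct_star_self_nonneg v)
    (fun h => hv (dotProduct_star_self_eq_zero.mp h.symm))

omit [DecidableEq k] in
lemma qf_real {S : Matrix k k ℂ} (hS : S.IsHermitian) (v : k → ℂ) :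
    (star v ⬝ᵥ (S *ᵥ v)).im = 0 := by
  have hX : star v ⬝ᵥ (S *ᵥ v) = star (S *ᵥ v) ⬝ᵥ v := herm_dot_shift hS v v
  have h1 : star v ⬝ᵥ (S *ᵥ v) = star (star (S *ᵥ v) ⬝ᵥ v) := star_dotProduct _ _
  have h : (starRingEnd ℂ) (star v ⬝ᵥ (S *ᵥ v)) = star v ⬝ᵥ (S *ᵥ v) := by
    conv_lhs => rw [show ((starRingEnd ℂ) (star v ⬝ᵥ (S *ᵥ v)) = star (star v ⬝ᵥ (S *ᵥ v))) from rfl, h1]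
    rw [star_star, ← hX]
  exact Complex.conj_eq_iff_im.mp h

lemma qf_expand {A : Matrix k k ℂ} (hA : A.IsHermitian) (x : k → ℂ) :
    ∃ c : k → ℂ, (x = 0 ↔ c = 0) ∧
      star x ⬝ᵥ (A *ᵥ x) = ∑ i, (hA.eigenvalues i : ℂ) * (star (c i) * c i) ∧
      star x ⬝ᵥ x = ∑ i, star (c i) * c i := by
  set U : Matrix k k ℂ := (hA.eigenvectorUnitary : Matrix k k ℂ) with hUdef
  have hU : U * star U = 1 := Matrix.mem_unitaryGroup_iff.mp hA.eigenvectorUnitary.2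
  set c : k → ℂ := star U *ᵥ x with hcdef
  have hstarc : star c = star x ᵥ* U := by
    rw [hcdef, star_mulVec, Matrix.star_eq_conjTranspose, conjTranspose_conjTranspose]
  have key : ∀ z : k → ℂ, star x ⬝ᵥ (U *ᵥ z) = star c ⬝ᵥ z := by
    intro z
    rw [hstarc, ← dotProduct_mulVec]
  refine ⟨c, ?_, ?_, ?_⟩
  · constructor
    · rintro rfl; simp [hcdef]
    · intro h
      have h2 : U *ᵥ (star U *ᵥ x) = 0 := by rw [← hcdef, h, Matrix.mulVec_zero]
      rwa [Matrix.mulVec_mulVec, hU, Matrix.one_mulVec] at h2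
  · conv_lhs => rw [hA.spectral_theorem, Unitary.conjStarAlgAut_apply]
    rw [← hUdef, ← Matrix.mulVec_mulVec, ← Matrix.mulVec_mulVec, key]
    simp only [dotProduct, Matrix.mulVec_diagonal, Function.comp]
    exact Finset.sum_congr rfl (fun i _ => by simp [RCLike.ofReal]; ring)
  · have h3 : star x ⬝ᵥ x = star x ⬝ᵥ ((U * star U) *ᵥ x) := by rw [hU, Matrix.one_mulVec]
    rw [h3, ← Matrix.mulVec_mulVec, key, ← hcdef, dotProduct]
    exact Finset.sum_congr rfl fun i _ => rfl

lemma qf_le_of_eig_le {A : Matrix k k ℂ} (hA : A.IsHermitian) {C : ℝ}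
    (h : ∀ i, hA.eigenvalues i ≤ C) (x : k → ℂ) :
    star x ⬝ᵥ (A *ᵥ x) ≤ (C : ℂ) * (star x ⬝ᵥ x) := by
  obtain ⟨c, -, h1, h2⟩ := qf_expand hA x
  rw [h1, h2, Finset.mul_sum]
  refine Finset.sum_le_sum fun i _ => ?_
  exact mul_le_mul_of_nonneg_right (by exact_mod_cast h i) (star_mul_self_nonneg _)

lemma exists_eig_le_of_qf {A : Matrix k k ℂ} (hA : A.IsHermitian) {x : k → ℂ} (hx : x ≠ 0)
    (h : star x ⬝ᵥ (A *ᵥ x) ≤ star x ⬝ᵥ x) : ∃ i, hA.eigenvalues i ≤ 1 := by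
  by_contra hall
  push_neg at hall
  obtain ⟨c, hc0, h1, h2⟩ := qf_expand hA x
  have hcne : c ≠ 0 := fun h' => hx (hc0.mpr h')
  obtain ⟨j, hj⟩ := Function.ne_iff.mp hcne
  have hstrict : ∑ i, star (c i) * c i < ∑ i, (hA.eigenvalues i : ℂ) * (star (c i) * c i) := by
    refine Finset.sum_lt_sum (fun i _ => ?_) ⟨j, Finset.mem_univ j, ?_⟩
    · nth_rewrite 1 [← one_mul (star (c i) * c i)]
      exact mul_le_mul_of_nonneg_right (by exact_mod_cast (hall i).le) (star_mul_self_nonneg _)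
    · nth_rewrite 1 [← one_mul (star (c j) * c j)]
      refine mul_lt_mul_of_pos_right (by exact_mod_cast hall j) ?_
      have hnn : (0:ℂ) ≤ star (c j) * c j := star_mul_self_nonneg _
      refine lt_of_le_of_ne hnn fun h' => hj ?_
      rcases mul_eq_zero.mp h'.symm with h'' | h''
      · exact star_eq_zero.mp h''
      · exact h''
  rw [h1, h2] at h
  exact absurd h hstrict.not_ge

lemma eig_le_of_pair {M : Matrix k k ℂ} {C : ℝ}
    (hub : ∀ x, star x ⬝ᵥ (M *ᵥ x) ≤ (C : ℂ) * (star x ⬝ᵥ x))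
    {t : ℝ} {v : k → ℂ} (hv : v ≠ 0) (heq : M *ᵥ v = (t : ℂ) • v) : t ≤ C := by
  have h1 : star v ⬝ᵥ (M *ᵥ v) = (t : ℂ) * (star v ⬝ᵥ v) := by
    rw [heq, dotProduct_smul, smul_eq_mul]
  have h2 := hub v
  rw [h1] at h2
  have hp := dot_pos hv
  set p := star v ⬝ᵥ v with hpdef
  have hpre : 0 < p.re := (Complex.lt_def.mp hp).1
  have h2' := (Complex.le_def.mp h2).1
  have him : p.im = 0 := ((Complex.lt_def.mp hp).2).symm
  rw [Complex.mul_re, Complex.mul_re, Complex.ofReal_re, Complex.ofReal_im, him] at h2'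
  simp only [mul_zero, zero_mul, sub_zero] at h2'
  exact le_of_mul_le_mul_right h2' hpre

lemma eig_pair {M : Matrix k k ℂ} (hM : M.IsHermitian) (i : k) :
    ∃ v : k → ℂ, v ≠ 0 ∧ M *ᵥ v = ((hM.eigenvalues i : ℝ) : ℂ) • v := by
  refine ⟨(WithLp.equiv 2 (k → ℂ)) (hM.eigenvectorBasis i), ?_, ?_⟩
  · intro h
    have h0 : hM.eigenvectorBasis i = 0 := by
      apply (WithLp.equiv 2 (k → ℂ)).injective
      simpa using h
    have hne := hM.eigenvectorBasis.toBasis.ne_zero i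
    rw [OrthonormalBasis.coe_toBasis] at hne
    exact hne h0
  · have h := hM.mulVec_eigenvectorBasis i
    change M *ᵥ (hM.eigenvectorBasis i).ofLp = ((hM.eigenvalues i : ℝ) : ℂ) • (hM.eigenvectorBasis i).ofLp
    rw [h]
    funext j
    simp [Complex.real_smul]

lemma lamMax_eq_max {M : Matrix (Fin 2) (Fin 2) ℂ} (hM : M.IsHermitian) :
    lamMax M = max (hM.eigenvalues 0) (hM.eigenvalues 1) := by
  set C := max (hM.eigenvalues 0) (hM.eigenvalues 1) with hC
  have hub : ∀ x, star x ⬝ᵥ (M *ᵥ x) ≤ (C : ℂ) * (star x ⬝ᵥ x) :=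
    qf_le_of_eig_le hM (fun i => by fin_cases i <;> [exact le_max_left _ _; exact le_max_right _ _])
  obtain ⟨i0, hi0⟩ : ∃ i0 : Fin 2, hM.eigenvalues i0 = C := by
    rcases le_total (hM.eigenvalues 0) (hM.eigenvalues 1) with h | h
    · exact ⟨1, (max_eq_right h).symm⟩
    · exact ⟨0, (max_eq_left h).symm⟩
  have hmem : C ∈ {t : ℝ | ∃ v : Fin 2 → ℂ, v ≠ 0 ∧ M *ᵥ v = (t : ℂ) • v} := by
    obtain ⟨v, hv, hveq⟩ := eig_pair hM i0
    exact ⟨v, hv, by rw [hveq, hi0]⟩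
  exact IsGreatest.csSup_eq ⟨hmem, fun t ⟨v, hv, heq⟩ => eig_le_of_pair hub hv heq⟩

lemma lamMax_ub {M : Matrix (Fin 2) (Fin 2) ℂ} (hM : M.IsHermitian) (x : Fin 2 → ℂ) :
    star x ⬝ᵥ (M *ᵥ x) ≤ ((lamMax M : ℝ) : ℂ) * (star x ⬝ᵥ x) := by
  refine qf_le_of_eig_le hM (fun i => ?_) x
  rw [lamMax_eq_max hM]
  fin_cases i
  · exact le_max_left _ _
  · exact le_max_right _ _

lemma lamMax_pair {M : Matrix (Fin 2) (Fin 2) ℂ} (hM : M.IsHermitian) :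
    ∃ v : Fin 2 → ℂ, v ≠ 0 ∧ M *ᵥ v = ((lamMax M : ℝ) : ℂ) • v := by
  obtain ⟨i0, hi0⟩ : ∃ i0 : Fin 2, hM.eigenvalues i0 = max (hM.eigenvalues 0) (hM.eigenvalues 1) := by
    rcases le_total (hM.eigenvalues 0) (hM.eigenvalues 1) with h | h
    · exact ⟨1, (max_eq_right h).symm⟩
    · exact ⟨0, (max_eq_left h).symm⟩
  obtain ⟨v, hv, hveq⟩ := eig_pair hM i0
  exact ⟨v, hv, by rw [hveq, hi0, lamMax_eq_max hM]⟩

lemma eig_le_of_ub {M : Matrix k k ℂ} (hM : M.IsHermitian) {C : ℝ}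
    (hub : ∀ x, star x ⬝ᵥ (M *ᵥ x) ≤ (C : ℂ) * (star x ⬝ᵥ x)) (i : k) :
    hM.eigenvalues i ≤ C := by
  obtain ⟨v, hv, hveq⟩ := eig_pair hM i
  exact eig_le_of_pair hub hv hveq

lemma posdef_of_psd {X : Matrix k k ℂ} (hX : X.PosSemidef) (h : ∀ x, X *ᵥ x = 0 → x = 0) :
    X.PosDef := by
  refine Matrix.PosDef.of_dotProduct_mulVec_pos hX.1 fun x hx => lt_of_le_of_ne (hX.dotProduct_mulVec_nonneg x) fun h0 => hx (h x ?_)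
  exact (hX.dotProduct_mulVec_zero_iff x).mp h0.symm

omit [DecidableEq k] in
lemma posdef_inj {C : Matrix k k ℂ} (hC : C.PosDef) : Function.Injective C.mulVec := by
  intro x y hxy
  by_contra hne
  have hsub : C *ᵥ (x - y) = 0 := by rw [Matrix.mulVec_sub, hxy, sub_self]
  have h2 := hC.dotProduct_mulVec_pos (sub_ne_zero.mpr hne)
  rw [hsub, dotProduct_zero] at h2
  exact lt_irrefl _ h2

omit [DecidableEq k] in
lemma psd_smul {X : Matrix k k ℂ} (hX : X.PosSemidef) {c : ℝ} (hc : 0 ≤ c) :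
    ((c : ℂ) • X).PosSemidef := by
  refine Matrix.PosSemidef.of_dotProduct_mulVec_nonneg ?_ ?_
  · unfold Matrix.IsHermitian
    rw [Matrix.conjTranspose_smul, hX.1.eq]
    congr 1
    simp
  · intro x
    rw [Matrix.smul_mulVec, dotProduct_smul, smul_eq_mul]
    exact mul_nonneg (by exact_mod_cast hc) (hX.dotProduct_mulVec_nonneg x)

omit [DecidableEq k] in
lemma posdef_conj {A C : Matrix k k ℂ} (hA : A.PosDef) (hC : C.IsHermitian)
    (hCi : Function.Injective C.mulVec) : (C * A * C).PosDef := by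
  refine Matrix.PosDef.of_dotProduct_mulVec_pos ?_ ?_
  · unfold Matrix.IsHermitian
    rw [Matrix.conjTranspose_mul, Matrix.conjTranspose_mul, hC.eq, hA.1.eq, mul_assoc]
  · intro x hx
    have hCx : C *ᵥ x ≠ 0 := fun h => hx (hCi (by rw [h, Matrix.mulVec_zero]))
    rw [← Matrix.mulVec_mulVec, ← Matrix.mulVec_mulVec, herm_dot_shift hC]
    exact hA.dotProduct_mulVec_pos hCx

lemma sqrt_posDef {B : Matrix k k ℂ} (hB : B.PosSemidef) (hBpd : B.PosDef) :
    hB.sqrt.PosDef := by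
  refine posdef_of_psd hB.posSemidef_sqrt fun x hx => ?_
  by_contra hne
  have hBx : B *ᵥ x = 0 := by
    rw [← hB.sqrt_mul_self, ← Matrix.mulVec_mulVec, hx, Matrix.mulVec_zero]
  have h2 := hBpd.dotProduct_mulVec_pos hne
  rw [hBx, dotProduct_zero] at h2
  exact lt_irrefl _ h2

lemma trace_eq_sum_eigen {A : Matrix k k ℂ} (hA : A.IsHermitian) :
    A.trace = ∑ i, ((hA.eigenvalues i : ℝ) : ℂ) := by
  conv_lhs => rw [hA.spectral_theorem, Unitary.conjStarAlgAut_apply]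
  rw [mul_assoc, Matrix.trace_mul_comm, mul_assoc]
  have hU : (star (hA.eigenvectorUnitary : Matrix k k ℂ)) * (hA.eigenvectorUnitary : Matrix k k ℂ) = 1 :=
    Matrix.mem_unitaryGroup_iff'.mp hA.eigenvectorUnitary.2
  rw [hU, mul_one, Matrix.trace_diagonal]
  rfl

lemma det_one_add_smul_vmv (c : ℂ) (u : k → ℂ) (X : Matrix k k ℂ) :
    (1 + c • (vecMulVec u (star u) * X)).det = 1 + c * (star u ⬝ᵥ (X *ᵥ u)) := by
  have h1 : c • (vecMulVec u (star u) * X) = replicateCol Unit u * replicateRow Unit (c • (star u ᵥ* X)) := by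
    ext i j
    simp only [Matrix.smul_apply, Matrix.mul_apply, vecMulVec_apply, Matrix.replicateCol_apply,
      Matrix.replicateRow_apply, Pi.smul_apply, Matrix.vecMul, dotProduct, Finset.univ_unique,
      Finset.sum_singleton, smul_eq_mul]
    simp only [Finset.mul_sum]
    exact Finset.sum_congr rfl fun l _ => by ring
  rw [h1, Matrix.det_one_add_replicateCol_mul_replicateRow, smul_dotProduct, dotProduct_mulVec, smul_eq_mul]

end S14

open S14 in
/-- For `n_T = 2`, if the Hermitian matrix `H_R†H_R − H_E†H_E`
has a positive eigenvalue but is not positive definite, then the secrecy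
capacity equals `log λ_max(M)` with
`M = (I + ρH_E†H_E)^{-1/2}(I + ρH_R†H_R)(I + ρH_E†H_E)^{-1/2}` positive
definite, and the supremum is attained at a rank-one `Q = u u†` with `u` a unit
vector. -/
theorem stmt_14 (nR nE : ℕ) (HR : Matrix (Fin nR) (Fin 2) ℂ)
    (HE : Matrix (Fin nE) (Fin 2) ℂ) (ρ : ℝ) (hρ : 0 < ρ)
    (hpos : ∃ (t : ℝ) (v : Fin 2 → ℂ), 0 < t ∧ v ≠ 0 ∧
      (HRᴴ * HR - HEᴴ * HE) *ᵥ v = (t : ℂ) • v)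
    (hnpd : ¬ (HRᴴ * HR - HEᴴ * HE).PosDef)
    (hB : ((1 : Matrix (Fin 2) (Fin 2) ℂ) + (ρ : ℂ) • (HEᴴ * HE)).PosSemidef)
    (M : Matrix (Fin 2) (Fin 2) ℂ)
    (hM : M = hB.sqrt⁻¹ * ((1 : Matrix (Fin 2) (Fin 2) ℂ) + (ρ : ℂ) • (HRᴴ * HR)) * hB.sqrt⁻¹) :
    M.PosDef ∧
    sSup {x : ℝ | ∃ Q : Matrix (Fin 2) (Fin 2) ℂ, Q.PosSemidef ∧ Q.trace = 1 ∧
        x = Real.log ((1 + (ρ : ℂ) • (HR * Q * HRᴴ)).det.re)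
          - Real.log ((1 + (ρ : ℂ) • (HE * Q * HEᴴ)).det.re)} = Real.log (lamMax M) ∧
    ∃ u : Fin 2 → ℂ, star u ⬝ᵥ u = 1 ∧
      (vecMulVec u (star u)).PosSemidef ∧ (vecMulVec u (star u)).trace = 1 ∧
      Real.log ((1 + (ρ : ℂ) • (HR * vecMulVec u (star u) * HRᴴ)).det.re)
        - Real.log ((1 + (ρ : ℂ) • (HE * vecMulVec u (star u) * HEᴴ)).det.re)
        = Real.log (lamMax M) := by
  have hρ0 : (0:ℝ) ≤ ρ := hρ.le
  set A' := HRᴴ * HR with hA'def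
  set B' := HEᴴ * HE with hB'def
  have hA' : A'.PosSemidef := Matrix.posSemidef_conjTranspose_mul_self HR
  have hB'psd : B'.PosSemidef := Matrix.posSemidef_conjTranspose_mul_self HE
  set Am : Matrix (Fin 2) (Fin 2) ℂ := 1 + (ρ:ℂ) • A' with hAmdef
  set Bm : Matrix (Fin 2) (Fin 2) ℂ := 1 + (ρ:ℂ) • B' with hBmdef
  have hAm : Am.PosDef := Matrix.PosDef.add_posSemidef Matrix.PosDef.one (psd_smul hA' hρ0)
  have hBm : Bm.PosDef := Matrix.PosDef.add_posSemidef Matrix.PosDef.one (psd_smul hB'psd hρ0)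
  have hsq : hB.sqrt.PosDef := sqrt_posDef hB hBm
  have hsqH : hB.sqrt.IsHermitian := hsq.1
  have hisq : (hB.sqrt⁻¹).PosDef := hsq.inv
  have hisqH : (hB.sqrt⁻¹).IsHermitian := hisq.1
  have hdet : IsUnit hB.sqrt.det := (Matrix.isUnit_iff_isUnit_det _).mp hsq.isUnit
  have hmulinv : hB.sqrt * hB.sqrt⁻¹ = 1 := Matrix.mul_nonsing_inv _ hdet
  have hinvmul : hB.sqrt⁻¹ * hB.sqrt = 1 := Matrix.nonsing_inv_mul _ hdet
  have hMpd : M.PosDef := by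
    rw [hM]; exact posdef_conj hAm hisqH (posdef_inj hisq)
  have hMH : M.IsHermitian := hMpd.1
  set lam : ℝ := lamMax M with hlamdef
  have hAmM : hB.sqrt * M * hB.sqrt = Am := by
    rw [hM]
    simp only [← mul_assoc]
    rw [hmulinv, one_mul, mul_assoc, hinvmul, mul_one]
  have expandAm : ∀ y, star y ⬝ᵥ (Am *ᵥ y) = star y ⬝ᵥ y + (ρ:ℂ) * (star y ⬝ᵥ (A' *ᵥ y)) := by
    intro y
    rw [hAmdef, Matrix.add_mulVec, Matrix.one_mulVec, dotProduct_add,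
      Matrix.smul_mulVec, dotProduct_smul, smul_eq_mul]
  have expandBm : ∀ y, star y ⬝ᵥ (Bm *ᵥ y) = star y ⬝ᵥ y + (ρ:ℂ) * (star y ⬝ᵥ (B' *ᵥ y)) := by
    intro y
    rw [hBmdef, Matrix.add_mulVec, Matrix.one_mulVec, dotProduct_add,
      Matrix.smul_mulVec, dotProduct_smul, smul_eq_mul]
  have hABm : ∀ y, star y ⬝ᵥ (Am *ᵥ y) ≤ (lam:ℂ) * (star y ⬝ᵥ (Bm *ᵥ y)) := by
    intro y
    have h1 : star y ⬝ᵥ (Am *ᵥ y) = star (hB.sqrt *ᵥ y) ⬝ᵥ (M *ᵥ (hB.sqrt *ᵥ y)) := by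
      rw [← hAmM, ← Matrix.mulVec_mulVec, ← Matrix.mulVec_mulVec, herm_dot_shift hsqH]
    have h2 : star y ⬝ᵥ (Bm *ᵥ y) = star (hB.sqrt *ᵥ y) ⬝ᵥ (hB.sqrt *ᵥ y) := by
      conv_lhs => rw [← hB.sqrt_mul_self]
      rw [← Matrix.mulVec_mulVec, herm_dot_shift hsqH]
    rw [h1, h2]
    exact lamMax_ub hMH _
  have hlam1 : (1:ℝ) < lam := by
    obtain ⟨t, v, ht, hv, heig⟩ := hpos
    have hp := dot_pos hv
    have hBv : (0:ℂ) < star v ⬝ᵥ (Bm *ᵥ v) := hBm.dotProduct_mulVec_pos hv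
    have hAmv : star v ⬝ᵥ (Am *ᵥ v) =
        star v ⬝ᵥ (Bm *ᵥ v) + (ρ:ℂ) * ((t:ℂ) * (star v ⬝ᵥ v)) := by
      have hsplit : Am = Bm + (ρ:ℂ) • (A' - B') := by
        rw [hAmdef, hBmdef, smul_sub]; abel
      rw [hsplit, Matrix.add_mulVec, dotProduct_add, Matrix.smul_mulVec, heig,
        dotProduct_smul, dotProduct_smul, smul_eq_mul, smul_eq_mul]
    by_contra hle
    push_neg at hle
    have h3 := hABm v
    rw [hAmv] at h3
    have h4 : (lam:ℂ) * (star v ⬝ᵥ (Bm *ᵥ v)) ≤ star v ⬝ᵥ (Bm *ᵥ v) := by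
      nth_rewrite 2 [← one_mul (star v ⬝ᵥ (Bm *ᵥ v))]
      exact mul_le_mul_of_nonneg_right (by exact_mod_cast hle) hBv.le
    have h5 : (0:ℂ) < (ρ:ℂ) * ((t:ℂ) * (star v ⬝ᵥ v)) :=
      mul_pos (by exact_mod_cast hρ) (mul_pos (by exact_mod_cast ht) hp)
    exact lt_irrefl _ (lt_of_lt_of_le (lt_add_of_pos_right _ h5) (h3.trans h4))
  have hlampos : (0:ℝ) < lam := lt_trans one_pos hlam1
  have detred : ∀ (m : ℕ) (H : Matrix (Fin m) (Fin 2) ℂ) (Q : Matrix (Fin 2) (Fin 2) ℂ),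
      (1 + (ρ:ℂ) • (H * Q * Hᴴ)).det = (1 + (ρ:ℂ) • (Q * (Hᴴ * H))).det := by
    intro m H Q
    have h1 : (ρ:ℂ) • (H * Q * Hᴴ) = H * ((ρ:ℂ) • (Q * Hᴴ)) := by
      rw [Matrix.mul_smul, Matrix.mul_assoc]
    rw [h1, Matrix.det_one_add_mul_comm, Matrix.smul_mul, Matrix.mul_assoc]
  have detpos : ∀ (m : ℕ) (H : Matrix (Fin m) (Fin 2) ℂ) (Q : Matrix (Fin 2) (Fin 2) ℂ),
      Q.PosSemidef → (0:ℂ) < (1 + (ρ:ℂ) • (H * Q * Hᴴ)).det := by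
    intro m H Q hQ
    exact (Matrix.PosDef.add_posSemidef Matrix.PosDef.one
      (psd_smul (hQ.mul_mul_conjTranspose_same H) hρ0)).det_pos
  have key : ∀ Q : Matrix (Fin 2) (Fin 2) ℂ, Q.PosSemidef → Q.trace = 1 →
      ((1:Matrix (Fin 2) (Fin 2) ℂ) + (ρ:ℂ) • (Q * A')).det.re ≤
        lam * ((1:Matrix (Fin 2) (Fin 2) ℂ) + (ρ:ℂ) • (Q * B')).det.re := by
    intro Q hQ htr
    set S := hQ.sqrt with hSdef
    have hSpsd := hQ.posSemidef_sqrt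
    have hSH : S.IsHermitian := hSpsd.1
    have hSS : S * S = Q := hQ.sqrt_mul_self
    set R : Matrix (Fin 2) (Fin 2) ℂ := 1 + (ρ:ℂ) • (S * A' * S) with hRdef
    set P : Matrix (Fin 2) (Fin 2) ℂ := 1 + (ρ:ℂ) • (S * B' * S) with hPdef
    have hdetR : ((1:Matrix (Fin 2) (Fin 2) ℂ) + (ρ:ℂ) • (Q * A')).det = R.det := by
      have h1 : (ρ:ℂ) • (Q * A') = S * ((ρ:ℂ) • (S * A')) := by
        rw [Matrix.mul_smul, show S * (S * A') = S * S * A' from (Matrix.mul_assoc S S A').symm, hSS]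
      rw [h1, Matrix.det_one_add_mul_comm, Matrix.smul_mul]
    have hdetP : ((1:Matrix (Fin 2) (Fin 2) ℂ) + (ρ:ℂ) • (Q * B')).det = P.det := by
      have h1 : (ρ:ℂ) • (Q * B') = S * ((ρ:ℂ) • (S * B')) := by
        rw [Matrix.mul_smul, show S * (S * B') = S * S * B' from (Matrix.mul_assoc S S B').symm, hSS]
      rw [h1, Matrix.det_one_add_mul_comm, Matrix.smul_mul]
    have hRpsd : (S * A' * S).PosSemidef := by
      have h := hA'.conjTranspose_mul_mul_same S
      rwa [hSH.eq] at h
    have hPpsd' : (S * B' * S).PosSemidef := by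
      have h := hB'psd.conjTranspose_mul_mul_same S
      rwa [hSH.eq] at h
    have hRpd : R.PosDef := Matrix.PosDef.add_posSemidef Matrix.PosDef.one (psd_smul hRpsd hρ0)
    have hPpd : P.PosDef := Matrix.PosDef.add_posSemidef Matrix.PosDef.one (psd_smul hPpsd' hρ0)
    have expandR : ∀ x, star x ⬝ᵥ (R *ᵥ x) =
        star x ⬝ᵥ x + (ρ:ℂ) * (star (S *ᵥ x) ⬝ᵥ (A' *ᵥ (S *ᵥ x))) := by
      intro x
      rw [hRdef, Matrix.add_mulVec, Matrix.one_mulVec, dotProduct_add, Matrix.smul_mulVec,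
        dotProduct_smul, smul_eq_mul, ← Matrix.mulVec_mulVec, ← Matrix.mulVec_mulVec,
        herm_dot_shift hSH]
    have expandP : ∀ x, star x ⬝ᵥ (P *ᵥ x) =
        star x ⬝ᵥ x + (ρ:ℂ) * (star (S *ᵥ x) ⬝ᵥ (B' *ᵥ (S *ᵥ x))) := by
      intro x
      rw [hPdef, Matrix.add_mulVec, Matrix.one_mulVec, dotProduct_add, Matrix.smul_mulVec,
        dotProduct_smul, smul_eq_mul, ← Matrix.mulVec_mulVec, ← Matrix.mulVec_mulVec,
        herm_dot_shift hSH]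
    have hQle : ∀ x : Fin 2 → ℂ, star x ⬝ᵥ (Q *ᵥ x) ≤ star x ⬝ᵥ x := by
      have hsumR : ∑ i, hQ.1.eigenvalues i = 1 := by
        have h1 := trace_eq_sum_eigen hQ.1
        rw [htr] at h1
        have h2 : ((∑ i, hQ.1.eigenvalues i : ℝ) : ℂ) = 1 := by
          push_cast
          exact h1.symm
        exact_mod_cast h2
      have hev : ∀ i, hQ.1.eigenvalues i ≤ 1 := fun i =>
        hsumR ▸ Finset.single_le_sum (fun j _ => hQ.eigenvalues_nonneg j) (Finset.mem_univ i)
      intro x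
      have h := qf_le_of_eig_le hQ.1 hev x
      rwa [Complex.ofReal_one, one_mul] at h
    have hRP : ∀ x, star x ⬝ᵥ (R *ᵥ x) ≤ (lam:ℂ) * (star x ⬝ᵥ (P *ᵥ x)) := by
      intro x
      have hyx : star (S *ᵥ x) ⬝ᵥ (S *ᵥ x) ≤ star x ⬝ᵥ x := by
        have h := hQle x
        rwa [← hSS, ← Matrix.mulVec_mulVec, herm_dot_shift hSH] at h
      have hpencil := hABm (S *ᵥ x)
      rw [expandAm (S *ᵥ x), expandBm (S *ᵥ x)] at hpencil
      rw [expandR x, expandP x]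
      set a := star (S *ᵥ x) ⬝ᵥ (A' *ᵥ (S *ᵥ x))
      set b := star (S *ᵥ x) ⬝ᵥ (B' *ᵥ (S *ᵥ x))
      set nn := star (S *ᵥ x) ⬝ᵥ (S *ᵥ x)
      set p := star x ⬝ᵥ x
      have hlamc : (1:ℂ) ≤ (lam:ℂ) := by exact_mod_cast hlam1.le
      have h2 : p + (ρ:ℂ)*a ≤ (p - nn) + (lam:ℂ)*(nn + (ρ:ℂ)*b) := by
        calc p + (ρ:ℂ)*a = (p - nn) + (nn + (ρ:ℂ)*a) := by ring
        _ ≤ (p - nn) + (lam:ℂ)*(nn + (ρ:ℂ)*b) := add_le_add_right hpencil _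
      refine h2.trans ?_
      have h4 : (0:ℂ) ≤ ((lam:ℂ) - 1) * (p - nn) :=
        mul_nonneg (by simpa using sub_nonneg.mpr hlamc) (sub_nonneg.mpr hyx)
      calc (p - nn) + (lam:ℂ)*(nn + (ρ:ℂ)*b)
          = (lam:ℂ)*(p + (ρ:ℂ)*b) - ((lam:ℂ)-1)*(p-nn) := by ring
      _ ≤ (lam:ℂ)*(p + (ρ:ℂ)*b) := sub_le_self _ h4
    -- conjugate by P^{-1/2}
    set sqP := hPpd.posSemidef.sqrt with hsqPdef
    have hsqPpd : sqP.PosDef := sqrt_posDef hPpd.posSemidef hPpd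
    have hsqPH : sqP.IsHermitian := hsqPpd.1
    have hiPpd : (sqP⁻¹).PosDef := hsqPpd.inv
    have hiPH : (sqP⁻¹).IsHermitian := hiPpd.1
    have hdet2 : IsUnit sqP.det := (Matrix.isUnit_iff_isUnit_det _).mp hsqPpd.isUnit
    have hmi : sqP * sqP⁻¹ = 1 := Matrix.mul_nonsing_inv _ hdet2
    have him2 : sqP⁻¹ * sqP = 1 := Matrix.nonsing_inv_mul _ hdet2
    have hPP : sqP⁻¹ * P * sqP⁻¹ = 1 := by
      conv_lhs => rw [← hPpd.posSemidef.sqrt_mul_self]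
      simp only [← Matrix.mul_assoc, ← hsqPdef]
      rw [him2, one_mul, hmi]
    set G := sqP⁻¹ * R * sqP⁻¹ with hGdef
    have hGpd : G.PosDef := posdef_conj hRpd hiPH (posdef_inj hiPpd)
    have hGH : G.IsHermitian := hGpd.1
    have hshift1 : ∀ z, star z ⬝ᵥ (G *ᵥ z) = star (sqP⁻¹ *ᵥ z) ⬝ᵥ (R *ᵥ (sqP⁻¹ *ᵥ z)) := by
      intro z
      rw [hGdef, ← Matrix.mulVec_mulVec, ← Matrix.mulVec_mulVec, herm_dot_shift hiPH]
    have hshift2 : ∀ z, star (sqP⁻¹ *ᵥ z) ⬝ᵥ (P *ᵥ (sqP⁻¹ *ᵥ z)) = star z ⬝ᵥ z := by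
      intro z
      rw [← herm_dot_shift hiPH, Matrix.mulVec_mulVec, Matrix.mulVec_mulVec, hPP,
        Matrix.one_mulVec]
    have hGub : ∀ x, star x ⬝ᵥ (G *ᵥ x) ≤ (lam:ℂ) * (star x ⬝ᵥ x) := by
      intro x
      rw [hshift1 x, ← hshift2 x]
      exact hRP _
    have hglam : ∀ i, hGH.eigenvalues i ≤ lam := eig_le_of_ub hGH hGub
    -- a vector with quadratic form of G at most 1
    have hDH : (A' - B').IsHermitian := hA'.1.sub hB'psd.1
    obtain ⟨v0, hv0ne, hv0⟩ : ∃ v0, v0 ≠ 0 ∧ ¬(0 < star v0 ⬝ᵥ ((A' - B') *ᵥ v0)) := by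
      by_contra hcon
      push_neg at hcon
      exact hnpd (Matrix.PosDef.of_dotProduct_mulVec_pos hDH fun x hx => hcon x hx)
    have hDv0' : star v0 ⬝ᵥ ((A' - B') *ᵥ v0) ≤ 0 := by
      have him3 := qf_real hDH v0
      have hwle : (star v0 ⬝ᵥ ((A' - B') *ᵥ v0)).re ≤ 0 := by
        by_contra hgt
        push_neg at hgt
        exact hv0 (Complex.lt_def.mpr ⟨by simpa using hgt, by rw [Complex.zero_im, him3]⟩)
      exact Complex.le_def.mpr ⟨by simpa using hwle, by rw [Complex.zero_im, him3]⟩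
    have hz : ∃ z : Fin 2 → ℂ, z ≠ 0 ∧ star z ⬝ᵥ (G *ᵥ z) ≤ star z ⬝ᵥ z := by
      set T := S * sqP⁻¹ with hT
      have hval : ∀ z, star z ⬝ᵥ (G *ᵥ z) =
          star z ⬝ᵥ z + (ρ:ℂ) * (star (T *ᵥ z) ⬝ᵥ ((A' - B') *ᵥ (T *ᵥ z))) := by
        intro z
        have hTz : T *ᵥ z = S *ᵥ (sqP⁻¹ *ᵥ z) := by rw [hT, ← Matrix.mulVec_mulVec]
        rw [hshift1 z, expandR (sqP⁻¹ *ᵥ z), ← hshift2 z, expandP (sqP⁻¹ *ᵥ z), hTz,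
          Matrix.sub_mulVec, dotProduct_sub]
        ring
      by_cases hinj : Function.Injective T.mulVec
      · have hsurj : Function.Surjective T.mulVec := by
          have h := (LinearMap.injective_iff_surjective (f := T.mulVecLin))
          have hco : ⇑T.mulVecLin = T.mulVec := by
            funext z; exact Matrix.mulVecLin_apply T z
          rw [hco] at h
          exact h.mp hinj
        obtain ⟨z, hzeq⟩ := hsurj v0
        refine ⟨z, fun h0 => hv0ne (by rw [← hzeq, h0, Matrix.mulVec_zero]), ?_⟩
        rw [hval z, hzeq]
        have h6 : (ρ:ℂ) * (star v0 ⬝ᵥ ((A' - B') *ᵥ v0)) ≤ 0 := by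
          have h7 := mul_le_mul_of_nonneg_left hDv0' (show (0:ℂ) ≤ (ρ:ℂ) by exact_mod_cast hρ0)
          rwa [mul_zero] at h7
        calc star z ⬝ᵥ z + (ρ:ℂ) * (star v0 ⬝ᵥ ((A' - B') *ᵥ v0)) ≤ star z ⬝ᵥ z + 0 :=
              add_le_add_right h6 _
        _ = star z ⬝ᵥ z := add_zero _
      · obtain ⟨z1, z2, hz12, hne⟩ := Function.not_injective_iff.mp hinj
        refine ⟨z1 - z2, sub_ne_zero.mpr hne, ?_⟩
        have hTz0 : T *ᵥ (z1 - z2) = 0 := by rw [Matrix.mulVec_sub, hz12, sub_self]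
        rw [hval _, hTz0]
        simp
    obtain ⟨z, hz0, hzle⟩ := hz
    obtain ⟨i1, hi1⟩ := exists_eig_le_of_qf hGH hz0 hzle
    have hdetG : G.det = ((hGH.eigenvalues 0 * hGH.eigenvalues 1 : ℝ) : ℂ) := by
      rw [hGH.det_eq_prod_eigenvalues, Fin.prod_univ_two, Complex.ofReal_mul]
      rfl
    have hprod : hGH.eigenvalues 0 * hGH.eigenvalues 1 ≤ lam := by
      have h0 := hGpd.eigenvalues_pos 0
      have h1 := hGpd.eigenvalues_pos 1
      have hl0 := hglam 0
      have hl1 := hglam 1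
      have hcase : hGH.eigenvalues 0 ≤ 1 ∨ hGH.eigenvalues 1 ≤ 1 := by
        fin_cases i1
        · exact Or.inl hi1
        · exact Or.inr hi1
      rcases hcase with hcase | hcase
      · calc hGH.eigenvalues 0 * hGH.eigenvalues 1 ≤ 1 * hGH.eigenvalues 1 :=
              mul_le_mul_of_nonneg_right hcase h1.le
        _ = hGH.eigenvalues 1 := one_mul _
        _ ≤ lam := hl1
      · calc hGH.eigenvalues 0 * hGH.eigenvalues 1 ≤ hGH.eigenvalues 0 * 1 :=
              mul_le_mul_of_nonneg_left hcase h0.le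
        _ = hGH.eigenvalues 0 := mul_one _
        _ ≤ lam := hl0
    have h7 : sqP.det * sqP⁻¹.det = 1 := by rw [← Matrix.det_mul, hmi, Matrix.det_one]
    have hdetRP : R.det = G.det * P.det := by
      have h5 : G.det = sqP⁻¹.det * R.det * sqP⁻¹.det := by
        rw [hGdef, Matrix.det_mul, Matrix.det_mul]
      have h6 : P.det = sqP.det * sqP.det := by
        conv_lhs => rw [← hPpd.posSemidef.sqrt_mul_self]
        rw [Matrix.det_mul, ← hsqPdef]
      rw [h5, h6]
      linear_combination (-(R.det * (sqP.det * sqP⁻¹.det + 1))) * h7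
    rw [hdetR, hdetP]
    have hPpos : (0:ℂ) < P.det := hPpd.det_pos
    have hPre : 0 < P.det.re := (Complex.lt_def.mp hPpos).1
    have hre : R.det.re = (hGH.eigenvalues 0 * hGH.eigenvalues 1) * P.det.re := by
      rw [hdetRP, hdetG, Complex.mul_re, Complex.ofReal_re, Complex.ofReal_im]
      have hPim : P.det.im = 0 := ((Complex.lt_def.mp hPpos).2).symm
      rw [hPim]
      ring
    rw [hre]
    exact mul_le_mul_of_nonneg_right hprod hPre.le
  -- construct the optimal rank-one input
  obtain ⟨v0, hv0ne, hv0eig⟩ := lamMax_pair hMH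
  set u0 : Fin 2 → ℂ := hB.sqrt⁻¹ *ᵥ v0 with hu0
  have hsqu0 : hB.sqrt *ᵥ u0 = v0 := by
    rw [hu0, Matrix.mulVec_mulVec, hmulinv, Matrix.one_mulVec]
  have hu0ne : u0 ≠ 0 := fun h => hv0ne (by rw [← hsqu0, h, Matrix.mulVec_zero])
  have hp0 : (0:ℂ) < star u0 ⬝ᵥ u0 := dot_pos hu0ne
  set r0 : ℝ := (star u0 ⬝ᵥ u0).re with hr0
  have hr0pos : 0 < r0 := (Complex.lt_def.mp hp0).1
  have hp0eq : star u0 ⬝ᵥ u0 = (r0:ℂ) := by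
    apply Complex.ext
    · simp [hr0]
    · rw [Complex.ofReal_im]
      exact ((Complex.lt_def.mp hp0).2).symm.trans Complex.zero_im
  set c : ℝ := (Real.sqrt r0)⁻¹ with hc
  have hcpos : 0 < c := inv_pos.mpr (Real.sqrt_pos.mpr hr0pos)
  have hccr0 : c * c * r0 = 1 := by
    rw [hc]
    rw [show r0 = Real.sqrt r0 * Real.sqrt r0 from (Real.mul_self_sqrt hr0pos.le).symm]
    field_simp
    rw [Real.sqrt_sq (Real.sqrt_nonneg _)]
  set u : Fin 2 → ℂ := (c:ℂ) • u0 with hu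
  have hstaru : star u = (c:ℂ) • star u0 := by
    rw [hu, star_smul, Complex.star_def, Complex.conj_ofReal]
  have huu : star u ⬝ᵥ u = 1 := by
    rw [hstaru, hu, smul_dotProduct, dotProduct_smul, hp0eq, smul_eq_mul, smul_eq_mul]
    calc (c:ℂ) * ((c:ℂ) * (r0:ℂ)) = ((c * c * r0 : ℝ) : ℂ) := by push_cast; ring
    _ = 1 := by rw [hccr0, Complex.ofReal_one]
  have hQpsd : (vecMulVec u (star u)).PosSemidef := by
    rw [vecMulVec_eq Unit, show replicateRow Unit (star u) = (replicateCol Unit u)ᴴ from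
      (Matrix.conjTranspose_replicateCol u).symm ▸ rfl]
    exact Matrix.posSemidef_self_mul_conjTranspose _
  have hQtr : (vecMulVec u (star u)).trace = 1 := by
    rw [← huu]
    simp only [Matrix.trace, Matrix.diag, vecMulVec_apply, dotProduct]
    exact Finset.sum_congr rfl fun i _ => mul_comm _ _
  -- the value of the objective at u u†
  set w : Fin 2 → ℂ := hB.sqrt *ᵥ u with hw
  have hwv : w = (c:ℂ) • v0 := by rw [hw, hu, Matrix.mulVec_smul, hsqu0]
  have hshiftu1 : star u ⬝ᵥ (Am *ᵥ u) = star w ⬝ᵥ (M *ᵥ w) := by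
    rw [← hAmM, ← Matrix.mulVec_mulVec, ← Matrix.mulVec_mulVec, herm_dot_shift hsqH, hw]
  have hshiftu2 : star u ⬝ᵥ (Bm *ᵥ u) = star w ⬝ᵥ w := by
    conv_lhs => rw [← hB.sqrt_mul_self]
    rw [← Matrix.mulVec_mulVec, herm_dot_shift hsqH, hw]
  have hAmu : star u ⬝ᵥ (Am *ᵥ u) = (lam:ℂ) * (star u ⬝ᵥ (Bm *ᵥ u)) := by
    rw [hshiftu1, hshiftu2, hwv, Matrix.mulVec_smul, hv0eig]
    rw [star_smul, Complex.star_def, Complex.conj_ofReal]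
    simp only [smul_dotProduct, dotProduct_smul, smul_eq_mul]
    ring
  have hdetN : (1 + (ρ:ℂ) • (HR * vecMulVec u (star u) * HRᴴ)).det = star u ⬝ᵥ (Am *ᵥ u) := by
    rw [detred nR HR _, det_one_add_smul_vmv, expandAm u, huu]
  have hdetD : (1 + (ρ:ℂ) • (HE * vecMulVec u (star u) * HEᴴ)).det = star u ⬝ᵥ (Bm *ᵥ u) := by
    rw [detred nE HE _, det_one_add_smul_vmv, expandBm u, huu]
  have hDpos : (0:ℂ) < star u ⬝ᵥ (Bm *ᵥ u) := by
    rw [← hdetD]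
    exact detpos nE HE _ hQpsd
  have hDre : 0 < (star u ⬝ᵥ (Bm *ᵥ u)).re := (Complex.lt_def.mp hDpos).1
  have hDim : (star u ⬝ᵥ (Bm *ᵥ u)).im = 0 := ((Complex.lt_def.mp hDpos).2).symm
  have hNre : ((lam:ℂ) * (star u ⬝ᵥ (Bm *ᵥ u))).re = lam * (star u ⬝ᵥ (Bm *ᵥ u)).re := by
    rw [Complex.mul_re, Complex.ofReal_re, Complex.ofReal_im, hDim]
    ring
  have hval : Real.log ((1 + (ρ:ℂ) • (HR * vecMulVec u (star u) * HRᴴ)).det.re)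
      - Real.log ((1 + (ρ:ℂ) • (HE * vecMulVec u (star u) * HEᴴ)).det.re)
      = Real.log lam := by
    rw [hdetN, hdetD, hAmu, hNre, Real.log_mul hlampos.ne' hDre.ne']
    ring
  refine ⟨hMpd, ?_, ⟨u, huu, hQpsd, hQtr, hval⟩⟩
  apply IsGreatest.csSup_eq
  constructor
  · exact ⟨vecMulVec u (star u), hQpsd, hQtr, hval.symm⟩
  · rintro x ⟨Q, hQ, htr, rfl⟩
    have h1 : (1 + (ρ:ℂ) • (HR * Q * HRᴴ)).det.re
        = ((1:Matrix (Fin 2) (Fin 2) ℂ) + (ρ:ℂ) • (Q * A')).det.re := by rw [detred]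
    have h2 : (1 + (ρ:ℂ) • (HE * Q * HEᴴ)).det.re
        = ((1:Matrix (Fin 2) (Fin 2) ℂ) + (ρ:ℂ) • (Q * B')).det.re := by rw [detred]
    rw [h1, h2]
    have hKey := key Q hQ htr
    have hDpos2 : 0 < ((1:Matrix (Fin 2) (Fin 2) ℂ) + (ρ:ℂ) • (Q * B')).det.re := by
      have h := detpos nE HE Q hQ
      rw [detred nE HE Q] at h
      exact (Complex.lt_def.mp h).1
    have hNpos2 : 0 < ((1:Matrix (Fin 2) (Fin 2) ℂ) + (ρ:ℂ) • (Q * A')).det.re := by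
      have h := detpos nR HR Q hQ
      rw [detred nR HR Q] at h
      exact (Complex.lt_def.mp h).1
    have hlog := Real.log_le_log hNpos2 hKey
    rw [Real.log_mul hlampos.ne' hDpos2.ne'] at hlog
    linarith
end

section
/- Let n_T = 2 and suppose the Hermitian 2×2 matrix H_R†H_R − H_E†H_E is positive definite. Then there exists ρ₀ > 0 such that for every ρ > ρ₀, every maximizer Q of the secrecy rate C_s over Ω has rank two (i.e., no rank-one matrix in Ω maximizes C_s). -/
open Matrix
open scoped ComplexOrder

namespace Stmt16

set_option maxHeartbeats 1000000

abbrev Mat2 := Matrix (Fin 2) (Fin 2) ℂ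

lemma ch2 (M : Mat2) : M * M = M.trace • M - M.det • (1 : Mat2) := by
  ext i j
  fin_cases i <;> fin_cases j <;>
    simp [Matrix.mul_apply, Fin.sum_univ_two, Matrix.trace_fin_two, Matrix.det_fin_two,
      Matrix.one_apply] <;> ring

lemma madj (M : Mat2) : M + M.adjugate = M.trace • (1 : Mat2) := by
  rw [Matrix.adjugate_fin_two]
  ext i j
  fin_cases i <;> fin_cases j <;>
    simp [Matrix.trace_fin_two, Matrix.one_apply] <;> ring

section QP
variable {Q : Mat2} (hQ2 : Q * Q = Q) (hQt : Q.trace = 1)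

include hQ2 hQt

lemma adjQ : Q.adjugate = 1 - Q := by
  have h := madj Q
  rw [hQt, one_smul] at h
  linear_combination (norm := abel) h

lemma qXq (X : Mat2) : Q * X * Q = ((X * Q).trace) • Q := by
  have h := madj (Q * X * Q)
  have hadj : (Q * X * Q).adjugate = (1 - Q) * X.adjugate * (1 - Q) := by
    rw [Matrix.adjugate_mul_distrib, Matrix.adjugate_mul_distrib, adjQ hQ2 hQt, mul_assoc]
  rw [hadj] at h
  have hQP : Q * (1 - Q) = 0 := by rw [mul_sub, mul_one, hQ2, sub_self]
  have hPQ : (1 - Q) * Q = 0 := by rw [sub_mul, one_mul, hQ2, sub_self]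
  have h2 := congrArg (fun M => Q * M * Q) h
  simp only [mul_add, add_mul, Matrix.mul_smul, Matrix.smul_mul, mul_one] at h2
  rw [show Q * (Q * X * Q) * Q = Q * X * Q by
        simp only [← mul_assoc]; rw [hQ2, mul_assoc, hQ2],
      show Q * ((1 - Q) * X.adjugate * (1 - Q)) * Q = 0 by
        rw [← mul_assoc, ← mul_assoc, hQP, Matrix.zero_mul, Matrix.zero_mul, Matrix.zero_mul],
      add_zero] at h2
  rw [hQ2] at h2
  rw [h2]
  congr 1
  rw [Matrix.trace_mul_cycle, hQ2, Matrix.trace_mul_comm]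

lemma master (X : Mat2) :
    X.det = (Q * X).trace * ((1 - Q) * X).trace - (X * (1 - Q) * X * Q).trace := by
  have e1 : X * (1 - Q) * X * Q = X * X * Q - X * Q * X * Q := by
    noncomm_ring
  have e2 : X * Q * X * Q = ((X * Q).trace) • (X * Q) := by
    rw [mul_assoc X Q X, mul_assoc X (Q*X) Q, qXq hQ2 hQt X, Matrix.mul_smul]
  have e3 : X * X * Q = (X.trace • X - X.det • (1 : Mat2)) * Q := by rw [← ch2]
  rw [e1, e3, e2]
  simp only [Matrix.trace_sub, Matrix.trace_smul, Matrix.sub_mul, Matrix.smul_mul, one_mul,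
    Matrix.trace_mul_comm Q X, smul_eq_mul, Matrix.trace_one]
  rw [hQt]
  push_cast
  ring

end QP

section zzsec
variable {Q P : Mat2} (hQ2 : Q * Q = Q) (hQt : Q.trace = 1)
  (hP2 : P * P = P) (hPt : P.trace = 1)

include hQ2 hQt hP2 hPt

lemma zz (B D : Mat2) :
    (B * P * D * Q).trace * (D * P * B * Q).trace
      = (D * P * D * Q).trace * (B * P * B * Q).trace := by
  have way1 : Q * (B * P * D) * Q * (D * P * B) * Q
      = ((B * P * D * Q).trace * ((D * P * B) * Q).trace) • Q := by
    rw [qXq hQ2 hQt (B * P * D), Matrix.smul_mul, Matrix.smul_mul,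
      qXq hQ2 hQt (D * P * B), smul_smul]
  have way2 : Q * (B * P * D) * Q * (D * P * B) * Q
      = (((D * Q * D) * P).trace * ((B * P * B) * Q).trace) • Q := by
    have assoc1 : Q * (B * P * D) * Q * (D * P * B) * Q
        = (Q * B) * (P * (D * Q * D) * P) * (B * Q) := by
      simp only [← mul_assoc]
    rw [assoc1, qXq hP2 hPt (D * Q * D), Matrix.mul_smul, Matrix.smul_mul,
      show Q * B * P * (B * Q) = Q * (B * P * B) * Q by simp only [← mul_assoc],
      qXq hQ2 hQt (B * P * B), smul_smul]
  have h := way1.symm.trans way2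
  have htr := congrArg Matrix.trace h
  simp only [Matrix.trace_smul, smul_eq_mul, hQt, mul_one] at htr
  rw [htr]
  congr 1
  rw [Matrix.trace_mul_comm]
  simp only [← mul_assoc]
  rw [Matrix.trace_mul_cycle (P * D) Q D]
  simp only [← mul_assoc]

end zzsec


lemma trMM (M : Mat2) : 0 ≤ (Mᴴ * M).trace.re ∧ (Mᴴ * M).trace.im = 0 := by
  have h : (Mᴴ * M).trace
      = ∑ i : Fin 2, ∑ j : Fin 2, (starRingEnd ℂ) (M j i) * (M j i) := by
    simp [Matrix.trace, Matrix.diag, Matrix.mul_apply, Matrix.conjTranspose_apply]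
  have h2 : ∀ z : ℂ, (starRingEnd ℂ) z * z = (Complex.normSq z : ℂ) := by
    intro z; rw [← Complex.normSq_eq_conj_mul_self]
  rw [h]
  simp only [Fin.sum_univ_two, h2]
  constructor
  · simp only [Complex.add_re, Complex.ofReal_re]
    linarith [Complex.normSq_nonneg (M 0 0), Complex.normSq_nonneg (M 0 1),
      Complex.normSq_nonneg (M 1 0), Complex.normSq_nonneg (M 1 1)]
  · simp [Complex.add_im]

lemma real_tr_mul {X Y : Mat2} (hX : X.IsHermitian) (hY : Y.IsHermitian) :
    ((X * Y).trace.re : ℂ) = (X * Y).trace := by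
  rw [← Complex.conj_eq_iff_re]
  have h1 : ((X * Y)ᴴ).trace = star (X * Y).trace := Matrix.trace_conjTranspose _
  rw [Matrix.conjTranspose_mul, hX.eq, hY.eq, Matrix.trace_mul_comm] at h1
  exact h1.symm

lemma real_det {X : Mat2} (hX : X.IsHermitian) : ((X.det.re : ℂ)) = X.det := by
  have h := Matrix.det_conjTranspose X
  rw [hX.eq] at h
  exact Complex.conj_eq_iff_re.mp h.symm

lemma det_one_add_smul (c : ℂ) (M : Mat2) :
    (1 + c • M).det = 1 + c * M.trace + c ^ 2 * M.det := by
  simp [Matrix.det_fin_two, Matrix.trace_fin_two, Matrix.one_apply]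
  ring

lemma value {n : ℕ} (H : Matrix (Fin n) (Fin 2) ℂ) (ρ : ℝ) (S : Mat2) :
    (1 + (ρ : ℂ) • (H * S * Hᴴ)).det
      = 1 + ρ * (S * (Hᴴ * H)).trace + (ρ : ℂ) ^ 2 * S.det * (Hᴴ * H).det := by
  have h1 : (ρ : ℂ) • (H * S * Hᴴ) = H * ((ρ : ℂ) • (S * Hᴴ)) := by
    rw [Matrix.mul_assoc, Matrix.mul_smul]
  rw [h1, Matrix.det_one_add_mul_comm]
  have h2 : (ρ : ℂ) • (S * Hᴴ) * H = (ρ : ℂ) • (S * (Hᴴ * H)) := by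
    rw [Matrix.smul_mul, Matrix.mul_assoc]
  rw [h2, det_one_add_smul, Matrix.det_mul]
  ring

lemma smul_psd {M : Mat2} (c : ℝ) (hc : 0 ≤ c) (hM : M.PosSemidef) :
    ((c : ℂ) • M).PosSemidef := by
  constructor
  · unfold Matrix.IsHermitian
    rw [Matrix.conjTranspose_smul, hM.1.eq]
    congr 1
    simp [Complex.ext_iff]
  · intro x
    have h := hM.2 x
    have := (hM.smul (a := (c : ℂ)) (Complex.zero_le_real.mpr hc)).2 x
    exact this


lemma key (tB tD Δ b b' d d' g2 t2 m ρ : ℝ)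
    (hb : 0 ≤ b) (hb' : 0 ≤ b') (hd : 0 ≤ d) (hd' : 0 ≤ d')
    (hg2 : 0 ≤ g2) (ht2 : 0 ≤ t2)
    (htB : b + b' = tB) (htD : d + d' = tD)
    (hdB : 0 ≤ b * b' - g2)
    (hΔ : d * d' - t2 = Δ) (hΔpos : 0 < Δ)
    (hm2 : m ^ 2 ≤ g2 * t2)
    (hρ : 2 + tD + tB * tD + 2 * (tD + tB * tD) / Δ + (2 * tB * tD + 1) * (16 * tD) / Δ ^ 2 < ρ) :
    0 < (1 + ρ * b) ∧ 0 < (1 + ρ * (b + d)) ∧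
    0 < (1 + ((ρ - 1) * b + b') + (ρ - 1) * (b * b' - g2)) ∧
    0 < (1 + ((ρ - 1) * (b + d) + (b' + d')) + (ρ - 1) * ((b + d) * (b' + d') - g2 - t2 - 2 * m)) ∧
    (1 + ρ * (b + d)) * (1 + ((ρ - 1) * b + b') + (ρ - 1) * (b * b' - g2))
      < (1 + ((ρ - 1) * (b + d) + (b' + d')) + (ρ - 1) * ((b + d) * (b' + d') - g2 - t2 - 2 * m))
        * (1 + ρ * b) := by
  subst hΔ
  have hdd'pos : 0 < d * d' := by linarith
  have hdpos : 0 < d := by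
    rcases lt_or_ge 0 d with h | h
    · exact h
    · exfalso
      have hd0 : d = 0 := le_antisymm h hd
      rw [hd0] at hdd'pos; simp at hdd'pos
  have hd'pos : 0 < d' := by
    rcases lt_or_ge 0 d' with h | h
    · exact h
    · exfalso
      have hd0 : d' = 0 := le_antisymm h hd'
      rw [hd0] at hdd'pos; simp at hdd'pos
  have htDpos : 0 < tD := by linarith
  have htB0 : 0 ≤ tB := by linarith
  have htBD0 : 0 ≤ tB * tD := mul_nonneg htB0 htDpos.le
  have hdiv1 : 0 ≤ 2 * (tD + tB * tD) / (d * d' - t2) :=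
    div_nonneg (by linarith) hΔpos.le
  have hdiv2 : 0 ≤ (2 * tB * tD + 1) * (16 * tD) / (d * d' - t2) ^ 2 :=
    div_nonneg (mul_nonneg (by linarith) (by linarith)) (sq_nonneg _)
  have hρ1 : 1 < ρ := by linarith
  have hρ0 : 0 < ρ := by linarith
  -- uniform bound on m
  have hgle : g2 ≤ b * b' := by linarith
  have htle : t2 ≤ d * d' := by linarith
  have hgt : g2 * t2 ≤ (b * b') * (d * d') :=
    mul_le_mul hgle htle ht2 (mul_nonneg hb hb')
  have hbble : b * b' ≤ tB ^ 2 := by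
    have htB2 : tB ^ 2 = (b + b') ^ 2 := by rw [htB]
    linarith only [htB2, sq_nonneg b, sq_nonneg b', mul_nonneg hb hb']
  have hddle : d * d' ≤ tD ^ 2 := by
    have htD2 : tD ^ 2 = (d + d') ^ 2 := by rw [htD]
    linarith only [htD2, sq_nonneg d, sq_nonneg d', mul_nonneg hd hd']
  have hbd2 : (b * b') * (d * d') ≤ tB ^ 2 * tD ^ 2 :=
    mul_le_mul hbble hddle (mul_nonneg hd hd') (by positivity)
  have hm2' : m ^ 2 ≤ (tB * tD) ^ 2 := by
    have h := hm2.trans (hgt.trans hbd2)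
    linarith only [h]
  have hmub : m ≤ tB * tD := by nlinarith only [hm2', htBD0]
  -- bounds extracted from hρ
  have e1 : 2 * (tD + tB * tD) < (ρ - 1) * (d * d' - t2) := by
    have h' : 2 * (tD + tB * tD) / (d * d' - t2) < ρ - 1 := by linarith
    calc 2 * (tD + tB * tD) = 2 * (tD + tB * tD) / (d * d' - t2) * (d * d' - t2) := by
          rw [div_mul_cancel₀ _ hΔpos.ne']
    _ < (ρ - 1) * (d * d' - t2) := mul_lt_mul_of_pos_right h' hΔpos
  have e2 : (2 * tB * tD + 1) * (16 * tD) < ρ * (d * d' - t2) ^ 2 := by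
    have h' : (2 * tB * tD + 1) * (16 * tD) / (d * d' - t2) ^ 2 < ρ := by linarith
    calc (2 * tB * tD + 1) * (16 * tD)
        = (2 * tB * tD + 1) * (16 * tD) / (d * d' - t2) ^ 2 * (d * d' - t2) ^ 2 := by
          rw [div_mul_cancel₀ _ (pow_ne_zero 2 hΔpos.ne')]
    _ < ρ * (d * d' - t2) ^ 2 := mul_lt_mul_of_pos_right h' (pow_pos hΔpos 2)
  have e3 : tD + tB * tD + 2 < ρ := by linarith
  clear hρ hdiv1 hdiv2
  -- c ≥ 0
  have k1 : 4 * b ^ 2 * m ^ 2 ≤ 4 * b ^ 2 * (g2 * t2) :=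
    mul_le_mul_of_nonneg_left hm2 (by positivity)
  have k2 : g2 * t2 ≤ g2 * (d * d') := mul_le_mul_of_nonneg_left htle hg2
  have k3 : 4 * b ^ 2 * (g2 * t2) ≤ 4 * b ^ 2 * (g2 * (d * d')) :=
    mul_le_mul_of_nonneg_left k2 (by positivity)
  have hsq : (2 * b * m) ^ 2 ≤ (b ^ 2 * d' + d * g2) ^ 2 := by
    linarith only [k1, k3, sq_nonneg (b ^ 2 * d' - d * g2)]
  have hX0 : 0 ≤ b ^ 2 * d' + d * g2 := by positivity
  have h2bm : 2 * b * m ≤ b ^ 2 * d' + d * g2 := by nlinarith only [hsq, hX0]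
  have hc0 : 0 ≤ b * (d * d' - t2) + b ^ 2 * d' - 2 * b * m + d * g2 := by
    have : 0 ≤ b * (d * d' - t2) := mul_nonneg hb hΔpos.le
    linarith
  -- basic bounds
  have hb'd : b' * d ≤ tB * tD := mul_le_mul (by linarith) (by linarith) hd htB0
  have hbd' : 0 ≤ b * d' := mul_nonneg hb hd'
  have hE1pos : 0 < 1 + ((ρ - 1) * b + b') + (ρ - 1) * (b * b' - g2) := by
    have p1 : 0 ≤ (ρ - 1) * b := mul_nonneg (by linarith) hb
    have p2 : 0 ≤ (ρ - 1) * (b * b' - g2) := mul_nonneg (by linarith) hdB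
    linarith
  have hE0pos : 0 < 1 + ρ * b := by
    have : 0 ≤ ρ * b := mul_nonneg hρ0.le hb
    linarith
  have hR0pos : 0 < 1 + ρ * (b + d) := by
    have : 0 ≤ ρ * (b + d) := mul_nonneg hρ0.le (by linarith)
    linarith
  -- the main inequality
  have main : (1 + ρ * (b + d)) * (1 + ((ρ - 1) * b + b') + (ρ - 1) * (b * b' - g2))
      < (1 + ((ρ - 1) * (b + d) + (b' + d')) + (ρ - 1) * ((b + d) * (b' + d') - g2 - t2 - 2 * m))
        * (1 + ρ * b) := by
    rcases le_or_gt (2 * m) (2 * b * d' + (d * d' - t2) / 2) with hG | hG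
    · -- G ≥ Δ/2 case
      have key1 : 0 < (d' - d) - b' * d + (ρ - 1) * ((d * d' - t2) / 2) := by
        linarith only [e1, hb'd, htD, hd']
      have t1 : 0 ≤ (ρ - 1) * ((d * d' - t2) / 2 + 2 * (b * d') - 2 * m) :=
        mul_nonneg (by linarith) (by linarith)
      have t2' : 0 ≤ (ρ * (ρ - 1)) * (b * (d * d' - t2) + b ^ 2 * d' - 2 * b * m + d * g2) :=
        mul_nonneg (mul_nonneg hρ0.le (by linarith)) hc0
      linarith only [key1, t1, t2', hbd']
    · -- bad case
      have hmpos : 0 < m := by linarith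
      have hg2t2pos : 0 < g2 * t2 := lt_of_lt_of_le (pow_pos hmpos 2) hm2
      have ht2pos : 0 < t2 := by
        rcases lt_or_ge 0 t2 with h | h
        · exact h
        · exfalso
          have : g2 * t2 ≤ 0 := mul_nonpos_of_nonneg_of_nonpos hg2 h
          linarith
      have h5 : b * d' + (d * d' - t2) / 4 ≤ m := by linarith
      have h6 : d * (b * d' + (d * d' - t2) / 4) ≤ d * m := mul_le_mul_of_nonneg_left h5 hd
      have h7 : 0 ≤ b * (d * d' - t2) := mul_nonneg hb hΔpos.le
      have hdm : d * (d * d' - t2) / 4 ≤ d * m - b * t2 := by linarith only [h6, h7]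
      have l1 : 0 ≤ d ^ 2 * (g2 * t2 - m ^ 2) := mul_nonneg (sq_nonneg d) (by linarith)
      have l2 : 0 ≤ b * d * (d * d' - t2) * t2 :=
        mul_nonneg (mul_nonneg (mul_nonneg hb hd) hΔpos.le) ht2
      have l3 : 0 ≤ b ^ 2 * (d * d' - t2) * t2 :=
        mul_nonneg (mul_nonneg (sq_nonneg b) hΔpos.le) ht2
      have h9 : (d * m - b * t2) ^ 2
          ≤ t2 * (d * (b * (d * d' - t2) + b ^ 2 * d' - 2 * b * m + d * g2)) := by
        linarith only [l1, l2, l3]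
      have h10 : (d * (d * d' - t2) / 4) ^ 2 ≤ (d * m - b * t2) ^ 2 := by
        have h := mul_self_le_mul_self
          (div_nonneg (mul_nonneg hd hΔpos.le) (by norm_num)) hdm
        linarith only [h]
      have h11 : d ^ 2 * (d * d' - t2) ^ 2 / 16
          ≤ t2 * (d * (b * (d * d' - t2) + b ^ 2 * d' - 2 * b * m + d * g2)) := by
        linarith only [h9, h10]
      have ht2d : t2 ≤ d * tD := by
        have hexp : d * (d + d') = d * tD := by rw [htD]
        linarith only [sq_nonneg d, hexp, hΔpos]
      have h12' := mul_le_mul_of_nonneg_right ht2d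
        (mul_nonneg hd hc0 : 0 ≤ d * (b * (d * d' - t2) + b ^ 2 * d' - 2 * b * m + d * g2))
      have h12 : d ^ 2 * ((d * d' - t2) ^ 2 / 16)
          ≤ d ^ 2 * (tD * (b * (d * d' - t2) + b ^ 2 * d' - 2 * b * m + d * g2)) := by
        linarith only [h11, h12']
      have hd2 : 0 < d ^ 2 := by positivity
      have hc16 : (d * d' - t2) ^ 2 / 16
          ≤ tD * (b * (d * d' - t2) + b ^ 2 * d' - 2 * b * m + d * g2) :=
        (mul_le_mul_iff_right₀ hd2).mp h12
      have h13 : ρ * ((d * d' - t2) ^ 2 / 16)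
          ≤ ρ * (tD * (b * (d * d' - t2) + b ^ 2 * d' - 2 * b * m + d * g2)) :=
        mul_le_mul_of_nonneg_left hc16 hρ0.le
      have h14 : (16 * tD) * (2 * tB * tD + 1)
          < (16 * tD) * (ρ * (b * (d * d' - t2) + b ^ 2 * d' - 2 * b * m + d * g2)) := by
        linarith only [e2, h13]
      have hρc : 2 * tB * tD + 1
          ≤ ρ * (b * (d * d' - t2) + b ^ 2 * d' - 2 * b * m + d * g2) :=
        le_of_lt ((mul_lt_mul_iff_right₀ (by linarith : (0:ℝ) < 16 * tD)).mp h14)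
      have t1 : (ρ - 1) * (2 * tB * tD + 1)
          ≤ (ρ - 1) * (ρ * (b * (d * d' - t2) + b ^ 2 * d' - 2 * b * m + d * g2)) :=
        mul_le_mul_of_nonneg_left hρc (by linarith)
      have t2m : (ρ - 1) * m ≤ (ρ - 1) * (tB * tD) :=
        mul_le_mul_of_nonneg_left hmub (by linarith)
      have t3 : 0 ≤ (ρ - 1) * (d * d' - t2) := mul_nonneg (by linarith) hΔpos.le
      have t4 : 0 ≤ (2 * ρ - 1) * (b * d') := mul_nonneg (by linarith) hbd'
      have hps : 0 < (d' - d) - b' * d + (ρ - 1) := by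
        linarith only [e3, hb'd, htD, hd, hd']
      linarith only [hps, t1, t2m, t3, t4]
  have hR1E0 : 0 < (1 + ((ρ - 1) * (b + d) + (b' + d'))
      + (ρ - 1) * ((b + d) * (b' + d') - g2 - t2 - 2 * m)) * (1 + ρ * b) :=
    (mul_pos hR0pos hE1pos).trans main
  have hR1pos : 0 < 1 + ((ρ - 1) * (b + d) + (b' + d'))
      + (ρ - 1) * ((b + d) * (b' + d') - g2 - t2 - 2 * m) := by
    by_contra h
    push_neg at h
    nlinarith only [hR1E0, hE0pos, h]
  exact ⟨hE0pos, hR0pos, hE1pos, hR1pos, main⟩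


lemma tr_QXQ {Q : Mat2} (hQ2 : Q * Q = Q) (X : Mat2) :
    (Q * X * Q).trace = (X * Q).trace := by
  rw [Matrix.trace_mul_comm, ← Matrix.mul_assoc, hQ2, Matrix.trace_mul_comm]

lemma nonneg_tr {Q : Mat2} (N : Mat2) (hQ2 : Q * Q = Q) (hQh : Qᴴ = Q) :
    0 ≤ ((Nᴴ * N) * Q).trace.re ∧ ((Nᴴ * N) * Q).trace.im = 0 := by
  have h := trMM (N * Q)
  have he : (N * Q)ᴴ * (N * Q) = Q * (Nᴴ * N) * Q := by
    rw [Matrix.conjTranspose_mul, hQh]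
    simp only [Matrix.mul_assoc]
  rw [he, tr_QXQ hQ2] at h
  exact h

lemma det_add2 (X Y : Mat2) :
    (X + Y).det = X.det + Y.det + X.trace * Y.trace - (X * Y).trace := by
  simp [Matrix.det_fin_two, Matrix.trace_fin_two, Matrix.mul_apply, Fin.sum_univ_two]
  ring

lemma creal {z : ℂ} (h : z.im = 0) : z = (z.re : ℂ) := by
  exact (Complex.ext (by simp) (by simp [h])).symm

end Stmt16


set_option maxHeartbeats 2000000 in
open Stmt16 in
/-- For `n_T = 2`, if `H_R†H_R − H_E†H_E` is positive definite,
then there exists `ρ₀ > 0` such that for every `ρ > ρ₀`, every maximizer of the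
secrecy rate over `Ω` has rank two. -/
theorem stmt_16 (nR nE : ℕ) (HR : Matrix (Fin nR) (Fin 2) ℂ)
    (HE : Matrix (Fin nE) (Fin 2) ℂ)
    (hpd : (HRᴴ * HR - HEᴴ * HE).PosDef) :
    ∃ ρ₀ : ℝ, 0 < ρ₀ ∧ ∀ ρ : ℝ, ρ₀ < ρ →
      ∀ Q : Matrix (Fin 2) (Fin 2) ℂ, Q.PosSemidef → Q.trace = 1 →
        (∀ Q' : Matrix (Fin 2) (Fin 2) ℂ, Q'.PosSemidef → Q'.trace = 1 →
          Real.log ((1 + (ρ : ℂ) • (HR * Q' * HRᴴ)).det.re)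
              - Real.log ((1 + (ρ : ℂ) • (HE * Q' * HEᴴ)).det.re)
            ≤ Real.log ((1 + (ρ : ℂ) • (HR * Q * HRᴴ)).det.re)
              - Real.log ((1 + (ρ : ℂ) • (HE * Q * HEᴴ)).det.re)) →
        Q.rank = 2 := by
  classical
  set A : Mat2 := HRᴴ * HR with hAdef
  set B : Mat2 := HEᴴ * HE with hBdef
  set D : Mat2 := HRᴴ * HR - HEᴴ * HE with hDdef
  have hBD : B + D = A := by rw [hBdef, hDdef, hAdef]; abel
  have hApsd : A.PosSemidef := Matrix.posSemidef_conjTranspose_mul_self HR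
  have hBpsd : B.PosSemidef := Matrix.posSemidef_conjTranspose_mul_self HE
  have hDpsd : D.PosSemidef := hpd.posSemidef
  have hAherm : A.IsHermitian := hApsd.1
  have hBherm : B.IsHermitian := hBpsd.1
  have hDherm : D.IsHermitian := hDpsd.1
  obtain ⟨MB, hMB⟩ : ∃ M : Mat2, B = Mᴴ * M := by
    open scoped MatrixOrder Matrix.Norms.L2Operator in
    exact CStarAlgebra.nonneg_iff_eq_star_mul_self.mp hBpsd.nonneg
  obtain ⟨MD, hMD⟩ : ∃ M : Mat2, D = Mᴴ * M := by
    open scoped MatrixOrder Matrix.Norms.L2Operator in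
    exact CStarAlgebra.nonneg_iff_eq_star_mul_self.mp hDpsd.nonneg
  set tB : ℝ := B.trace.re with htBdef
  set tD : ℝ := D.trace.re with htDdef
  set Δ : ℝ := D.det.re with hΔdef
  -- Δ > 0 and D.det real
  have hDdet : (0 : ℂ) < D.det := hpd.det_pos
  have hΔpos : 0 < Δ := by
    have := Complex.lt_def.mp hDdet
    simpa [hΔdef] using this.1
  have hDdetreal : D.det = (Δ : ℂ) := by
    have := Complex.lt_def.mp hDdet
    rw [hΔdef]; exact creal this.2.symm
  -- tB, tD nonneg
  have htB0 : 0 ≤ tB := by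
    have h := trMM MB
    rw [← hMB] at h
    simpa [htBdef] using h.1
  have htD0 : 0 ≤ tD := by
    have h := trMM MD
    rw [← hMD] at h
    simpa [htDdef] using h.1
  refine ⟨2 + tD + tB * tD + 2 * (tD + tB * tD) / Δ + (2 * tB * tD + 1) * (16 * tD) / Δ ^ 2,
    ?_, ?_⟩
  · have d1 : 0 ≤ 2 * (tD + tB * tD) / Δ :=
      div_nonneg (by positivity) hΔpos.le
    have d2 : 0 ≤ (2 * tB * tD + 1) * (16 * tD) / Δ ^ 2 :=
      div_nonneg (by positivity) (sq_nonneg _)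
    have d3 : 0 ≤ tB * tD := by positivity
    linarith
  intro ρ hρ Q hQpsd hQtr hmax
  rcases eq_or_ne Q.det 0 with hdet | hdet
  swap
  · have hU : IsUnit Q := (Matrix.isUnit_iff_isUnit_det Q).mpr (isUnit_iff_ne_zero.mpr hdet)
    rw [Matrix.rank_of_isUnit Q hU]
    simp
  exfalso
  have hρpos : (0:ℝ) < ρ := by
    have d1 : 0 ≤ 2 * (tD + tB * tD) / Δ := div_nonneg (by positivity) hΔpos.le
    have d2 : 0 ≤ (2 * tB * tD + 1) * (16 * tD) / Δ ^ 2 :=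
      div_nonneg (by positivity) (sq_nonneg _)
    have d3 : 0 ≤ tB * tD := by positivity
    linarith
  have hρ2 : (2:ℝ) ≤ ρ := by
    have d1 : 0 ≤ 2 * (tD + tB * tD) / Δ := div_nonneg (by positivity) hΔpos.le
    have d2 : 0 ≤ (2 * tB * tD + 1) * (16 * tD) / Δ ^ 2 :=
      div_nonneg (by positivity) (sq_nonneg _)
    have d3 : 0 ≤ tB * tD := by positivity
    linarith
  have hQherm : Qᴴ = Q := hQpsd.1
  have hQ2 : Q * Q = Q := by
    have h := ch2 Q
    rw [hQtr, hdet] at h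
    simpa using h
  set P : Mat2 := 1 - Q with hPdef
  have hPherm : Pᴴ = P := by
    rw [hPdef, Matrix.conjTranspose_sub, Matrix.conjTranspose_one, hQherm]
  have hP2 : P * P = P := by
    have h : (1 - Q) * (1 - Q) = 1 - Q - Q + Q * Q := by noncomm_ring
    rw [hQ2] at h
    rw [hPdef, h]
    abel
  have hPt : P.trace = 1 := by
    rw [hPdef, Matrix.trace_sub, Matrix.trace_one, hQtr]
    norm_num
  have hPpsd : P.PosSemidef := by
    have h : Pᴴ * P = P := by rw [hPherm, hP2]
    have h2 := Matrix.posSemidef_conjTranspose_mul_self P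
    rwa [h] at h2
  have hQP : Q * P = 0 := by rw [hPdef, mul_sub, mul_one, hQ2, sub_self]
  -- scalars
  set b : ℝ := ((Q * B).trace.re) with hbdef
  set b' : ℝ := ((P * B).trace.re) with hb'def
  set d : ℝ := ((Q * D).trace.re) with hddef
  set d' : ℝ := ((P * D).trace.re) with hd'def
  set g2 : ℝ := ((B * P * B * Q).trace.re) with hg2def
  set t2 : ℝ := ((D * P * D * Q).trace.re) with ht2def
  set m : ℝ := ((B * P * D * Q).trace.re) with hmdef
  -- realness casts
  have hbC : (Q * B).trace = (b : ℂ) := (real_tr_mul hQpsd.1 hBherm).symm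
  have hb'C : (P * B).trace = (b' : ℂ) := (real_tr_mul hPherm hBherm).symm
  have hdC : (Q * D).trace = (d : ℂ) := (real_tr_mul hQpsd.1 hDherm).symm
  have hd'C : (P * D).trace = (d' : ℂ) := (real_tr_mul hPherm hDherm).symm
  -- nonnegativity of scalars
  have hb0 : 0 ≤ b := by
    have h := (nonneg_tr MB hQ2 hQherm).1
    rw [← hMB, Matrix.trace_mul_comm] at h
    exact h
  have hb'0 : 0 ≤ b' := by
    have h := (nonneg_tr MB hP2 hPherm).1
    rw [← hMB, Matrix.trace_mul_comm] at h
    exact h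
  have hd0 : 0 ≤ d := by
    have h := (nonneg_tr MD hQ2 hQherm).1
    rw [← hMD, Matrix.trace_mul_comm] at h
    exact h
  have hd'0 : 0 ≤ d' := by
    have h := (nonneg_tr MD hP2 hPherm).1
    rw [← hMD, Matrix.trace_mul_comm] at h
    exact h
  have hPBsq : (P * B)ᴴ * (P * B) = B * P * B := by
    rw [Matrix.conjTranspose_mul, hPherm, hBherm.eq, ← Matrix.mul_assoc (B * P) P B,
      Matrix.mul_assoc B P P, hP2]
  have hPDsq : (P * D)ᴴ * (P * D) = D * P * D := by
    rw [Matrix.conjTranspose_mul, hPherm, hDherm.eq, ← Matrix.mul_assoc (D * P) P D,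
      Matrix.mul_assoc D P P, hP2]
  have hg2f := nonneg_tr (P * B) hQ2 hQherm
  rw [hPBsq] at hg2f
  have ht2f := nonneg_tr (P * D) hQ2 hQherm
  rw [hPDsq] at ht2f
  have hg20 : 0 ≤ g2 := hg2f.1
  have ht20 : 0 ≤ t2 := ht2f.1
  have hg2C : (B * P * B * Q).trace = (g2 : ℂ) := creal hg2f.2
  have ht2C : (D * P * D * Q).trace = (t2 : ℂ) := creal ht2f.2
  -- conjugate of the cross trace
  have hconj : star ((B * P * D * Q).trace) = (D * P * B * Q).trace := by
    rw [← Matrix.trace_conjTranspose]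
    simp only [Matrix.conjTranspose_mul, hQherm, hPherm, hBherm.eq, hDherm.eq]
    rw [Matrix.trace_mul_comm]
    simp only [← Matrix.mul_assoc]
  have hzz := zz hQ2 hQtr hP2 hPt B D
  have hnormSq : (B * P * D * Q).trace * star ((B * P * D * Q).trace) = ((t2 * g2 : ℝ) : ℂ) := by
    rw [hconj, hzz, ht2C, hg2C]
    push_cast
    ring
  have hm2 : m ^ 2 ≤ g2 * t2 := by
    have h1 : ((Complex.normSq ((B * P * D * Q).trace) : ℝ) : ℂ) = ((t2 * g2 : ℝ) : ℂ) := by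
      rw [← Complex.mul_conj]
      exact hnormSq
    have h2 : Complex.normSq ((B * P * D * Q).trace) = t2 * g2 := by exact_mod_cast h1
    have h3 := Complex.normSq_apply ((B * P * D * Q).trace)
    nlinarith [sq_nonneg ((B * P * D * Q).trace).im, mul_self_nonneg ((B * P * D * Q).trace).im]
  -- master identities
  have hmB := master hQ2 hQtr B
  have hmD := master hQ2 hQtr D
  have hmA := master hQ2 hQtr A
  rw [← hPdef] at hmB hmD hmA
  have hdBr : B.det = ((b * b' - g2 : ℝ) : ℂ) := by
    rw [hmB, hbC, hb'C, hg2C]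
    push_cast
    ring
  have hdDr : D.det = ((d * d' - t2 : ℝ) : ℂ) := by
    rw [hmD, hdC, hd'C, ht2C]
    push_cast
    ring
  have hΔeq : d * d' - t2 = Δ := by
    have h := hdDr.symm.trans hDdetreal
    exact_mod_cast h
  -- A-traces
  have hQAC : (Q * A).trace = ((b + d : ℝ) : ℂ) := by
    rw [← hBD, Matrix.mul_add, Matrix.trace_add, hbC, hdC]
    push_cast
    ring
  have hPAC : (P * A).trace = ((b' + d' : ℝ) : ℂ) := by
    rw [← hBD, Matrix.mul_add, Matrix.trace_add, hb'C, hd'C]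
    push_cast
    ring
  have hexpA : A * P * A * Q
      = B * P * B * Q + B * P * D * Q + (D * P * B * Q + D * P * D * Q) := by
    rw [← hBD]
    noncomm_ring
  have hzc : (B * P * D * Q).trace + (D * P * B * Q).trace = ((2 * m : ℝ) : ℂ) := by
    rw [← hconj, Complex.star_def, Complex.add_conj]
  have hdAr : A.det = (((b + d) * (b' + d') - g2 - t2 - 2 * m : ℝ) : ℂ) := by
    rw [hmA, hQAC, hPAC, hexpA, Matrix.trace_add, Matrix.trace_add, Matrix.trace_add,
      hg2C, ht2C]
    linear_combination (norm := (push_cast; ring1)) -hzc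
  -- det B nonneg
  have hdetBnn : 0 ≤ b * b' - g2 := by
    have h1 : B.det = star (MB.det) * MB.det := by
      rw [hMB, Matrix.det_mul, Matrix.det_conjTranspose]
    have h2 : B.det = ((Complex.normSq MB.det : ℝ) : ℂ) := by
      rw [h1, Complex.star_def, ← Complex.normSq_eq_conj_mul_self]
    have h3 : ((b * b' - g2 : ℝ) : ℂ) = ((Complex.normSq MB.det : ℝ) : ℂ) :=
      hdBr.symm.trans h2
    have h4 : b * b' - g2 = Complex.normSq MB.det := by exact_mod_cast h3
    rw [h4]
    exact Complex.normSq_nonneg _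
  -- trace sums
  have hQPB : Q * B + P * B = B := by rw [hPdef]; noncomm_ring
  have hQPD : Q * D + P * D = D := by rw [hPdef]; noncomm_ring
  have htBsum : b + b' = tB := by
    have h : B.trace = ((b + b' : ℝ) : ℂ) := by
      rw [← hQPB, Matrix.trace_add, hbC, hb'C]; push_cast; ring
    rw [htBdef, h]
    simp
  have htDsum : d + d' = tD := by
    have h : D.trace = ((d + d' : ℝ) : ℂ) := by
      rw [← hQPD, Matrix.trace_add, hdC, hd'C]; push_cast; ring
    rw [htDdef, h]
    simp
  -- det P = 0
  have hdetP : P.det = 0 := by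
    have h := det_add2 1 (-Q)
    have hneg : (-Q) = (-1 : ℂ) • Q := by simp
    rw [hneg, Matrix.det_smul, Matrix.trace_smul, Matrix.det_one, Matrix.trace_one,
      Matrix.one_mul, Matrix.trace_smul, hQtr, hdet] at h
    have hP1 : P = 1 + (-1 : ℂ) • Q := by rw [hPdef]; simp [sub_eq_add_neg]
    rw [hP1, h]
    norm_num
  -- the competitor
  set δ : ℝ := 1 / ρ with hδdef
  have hδpos : 0 < δ := by rw [hδdef]; positivity
  have hδle : δ ≤ 1 / 2 := by
    rw [hδdef]
    rw [div_le_div_iff₀ hρpos (by norm_num)]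
    linarith
  set Q' : Mat2 := ((1 - δ : ℝ) : ℂ) • Q + ((δ : ℝ) : ℂ) • P with hQ'def
  have hQ'psd : Q'.PosSemidef :=
    (smul_psd (1 - δ) (by linarith) hQpsd).add (smul_psd δ hδpos.le hPpsd)
  have hQ'tr : Q'.trace = 1 := by
    rw [hQ'def, Matrix.trace_add, Matrix.trace_smul, Matrix.trace_smul, hQtr, hPt]
    simp only [smul_eq_mul, mul_one]
    push_cast
    ring
  have hQ'X : ∀ X : Mat2, (Q' * X).trace
      = ((1 - δ : ℝ) : ℂ) * (Q * X).trace + ((δ : ℝ) : ℂ) * (P * X).trace := by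
    intro X
    rw [hQ'def, Matrix.add_mul, Matrix.smul_mul, Matrix.smul_mul, Matrix.trace_add,
      Matrix.trace_smul, Matrix.trace_smul]
    simp only [smul_eq_mul]
  have hdetQ' : Q'.det = ((δ * (1 - δ) : ℝ) : ℂ) := by
    have h := det_add2 (((1 - δ : ℝ) : ℂ) • Q) (((δ : ℝ) : ℂ) • P)
    have hzero : (((1 - δ : ℝ) : ℂ) • Q) * (((δ : ℝ) : ℂ) • P) = 0 := by
      rw [Matrix.smul_mul, Matrix.mul_smul, hQP]
      simp
    rw [hzero, Matrix.det_smul, Matrix.det_smul, Matrix.trace_smul, Matrix.trace_smul,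
      hQtr, hPt, hdet, hdetP] at h
    rw [hQ'def, h]
    simp only [Matrix.trace_zero, smul_eq_mul, mul_one]
    push_cast
    ring
  -- value formulas
  have hr0 : (1 + (ρ : ℂ) • (HR * Q * HRᴴ)).det = ((1 + ρ * (b + d) : ℝ) : ℂ) := by
    rw [value HR ρ Q, ← hAdef, hQAC, hdet]
    push_cast
    ring
  have he0 : (1 + (ρ : ℂ) • (HE * Q * HEᴴ)).det = ((1 + ρ * b : ℝ) : ℂ) := by
    rw [value HE ρ Q, ← hBdef, hbC, hdet]
    push_cast
    ring
  have hr1 : (1 + (ρ : ℂ) • (HR * Q' * HRᴴ)).det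
      = ((1 + ρ * ((1 - δ) * (b + d) + δ * (b' + d'))
          + ρ ^ 2 * (δ * (1 - δ)) * ((b + d) * (b' + d') - g2 - t2 - 2 * m) : ℝ) : ℂ) := by
    rw [value HR ρ Q', ← hAdef, hQ'X A, hQAC, hPAC, hdetQ', hdAr]
    push_cast
    ring
  have he1 : (1 + (ρ : ℂ) • (HE * Q' * HEᴴ)).det
      = ((1 + ρ * ((1 - δ) * b + δ * b')
          + ρ ^ 2 * (δ * (1 - δ)) * (b * b' - g2) : ℝ) : ℂ) := by
    rw [value HE ρ Q', ← hBdef, hQ'X B, hbC, hb'C, hdetQ', hdBr]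
    push_cast
    ring
  -- convert to the key-lemma normal forms
  have hρne : ρ ≠ 0 := ne_of_gt hρpos
  have hconvR : 1 + ρ * ((1 - δ) * (b + d) + δ * (b' + d'))
      + ρ ^ 2 * (δ * (1 - δ)) * ((b + d) * (b' + d') - g2 - t2 - 2 * m)
      = 1 + ((ρ - 1) * (b + d) + (b' + d'))
        + (ρ - 1) * ((b + d) * (b' + d') - g2 - t2 - 2 * m) := by
    rw [hδdef]
    field_simp
  have hconvE : 1 + ρ * ((1 - δ) * b + δ * b') + ρ ^ 2 * (δ * (1 - δ)) * (b * b' - g2)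
      = 1 + ((ρ - 1) * b + b') + (ρ - 1) * (b * b' - g2) := by
    rw [hδdef]
    field_simp
  -- apply the key inequality
  obtain ⟨hE0p, hR0p, hE1p, hR1p, hmainlt⟩ :=
    key tB tD Δ b b' d d' g2 t2 m ρ hb0 hb'0 hd0 hd'0 hg20 ht20 htBsum htDsum hdetBnn
      hΔeq hΔpos hm2 hρ
  -- extract the maximality inequality
  have hle := hmax Q' hQ'psd hQ'tr
  rw [hr0, he0, hr1, he1] at hle
  simp only [Complex.ofReal_re] at hle
  rw [hconvR, hconvE] at hle
  -- logs
  have hloglt : Real.log ((1 + ρ * (b + d))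
        * (1 + ((ρ - 1) * b + b') + (ρ - 1) * (b * b' - g2)))
      < Real.log ((1 + ((ρ - 1) * (b + d) + (b' + d'))
          + (ρ - 1) * ((b + d) * (b' + d') - g2 - t2 - 2 * m)) * (1 + ρ * b)) :=
    Real.log_lt_log (mul_pos hR0p hE1p) hmainlt
  rw [Real.log_mul (ne_of_gt hR0p) (ne_of_gt hE1p),
    Real.log_mul (ne_of_gt hR1p) (ne_of_gt hE0p)] at hloglt
  linarith [hle, hloglt]
end

section
/- Let x ∈ ℂ^{n} be a nonzero vector and X an n×n Hermitian positive semidefinite matrix, and suppose one of the following holds: (a) X is positive definite and x x† − X has a positive eigenvalue; or (b) X has rank n − 1 and x is not in the column space of X (i.e., x is linearly independent of the eigenvectors associated with the nonzero eigenvalues of X). Then the Hermitian matrix x x† − X has exactly one positive eigenvalue and its remaining n − 1 eigenvalues (counted with multiplicity) are all negative. -/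
open Matrix
open scoped ComplexOrder

/-- Let `x ∈ ℂⁿ` be nonzero and `X` Hermitian PSD. If either
(a) `X` is positive definite and `x x† − X` has a positive eigenvalue, or
(b) `X` has rank `n − 1` and `x` is not in the column space of `X`,
then the Hermitian matrix `x x† − X` has exactly one positive eigenvalue and
its remaining `n − 1` eigenvalues (with multiplicity) are all negative. -/
theorem stmt_17 (n : ℕ) (x : Fin n → ℂ) (hx : x ≠ 0)
    (X : Matrix (Fin n) (Fin n) ℂ) (hX : X.PosSemidef)
    (hA : (vecMulVec x (star x) - X).IsHermitian)
    (hcase :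
      (X.PosDef ∧ ∃ (t : ℝ) (v : Fin n → ℂ), 0 < t ∧ v ≠ 0 ∧
        (vecMulVec x (star x) - X) *ᵥ v = (t : ℂ) • v) ∨
      (X.rank = n - 1 ∧ x ∉ LinearMap.range X.mulVecLin)) :
    (Finset.univ.filter fun i => 0 < hA.eigenvalues i).card = 1 ∧
    (Finset.univ.filter fun i => hA.eigenvalues i < 0).card = n - 1 := by
  classical
  set A := vecMulVec x (star x) - X with hAdef
  have hn : 0 < n := by
    rcases Nat.eq_zero_or_pos n with h | h
    · subst h
      exact absurd (funext fun i => i.elim0) hx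
    · exact h
  -- dot product with itself is positive for nonzero vectors
  have hself : ∀ v : Fin n → ℂ, v ≠ 0 → 0 < star v ⬝ᵥ v := by
    intro v hv
    have h1 : 0 ≤ star v ⬝ᵥ v := by
      apply Finset.sum_nonneg
      intro i _
      have : (star v) i * v i = ((Complex.normSq (v i) : ℝ) : ℂ) := by
        simp [Complex.normSq_eq_conj_mul_self]
      rw [this]
      exact Complex.zero_le_real.mpr (Complex.normSq_nonneg _)
    rcases h1.lt_or_eq with h | h
    · exact h
    · exact absurd (dotProduct_star_self_eq_zero.mp h.symm) hv
  -- quadratic form identity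
  have hquad : ∀ v : Fin n → ℂ, star v ⬝ᵥ (A *ᵥ v)
      = (star v ⬝ᵥ x) * (star x ⬝ᵥ v) - star v ⬝ᵥ (X *ᵥ v) := by
    intro v
    have h1 : vecMulVec x (star x) *ᵥ v = (star x ⬝ᵥ v) • x := by
      ext i
      simp only [vecMulVec, mulVec, dotProduct, Pi.smul_apply, smul_eq_mul, of_apply,
        Finset.sum_mul, Finset.mul_sum]
      apply Finset.sum_congr rfl
      intro j _
      ring
    rw [hAdef, sub_mulVec, dotProduct_sub, h1, dotProduct_smul, smul_eq_mul, mul_comm]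
  have hconj : ∀ u v : Fin n → ℂ, star (star u ⬝ᵥ v) = star v ⬝ᵥ u := by
    intro u v
    rw [star_dotProduct, star_star]
  -- the main vanishing lemma
  have main : ∀ v : Fin n → ℂ, star x ⬝ᵥ v = 0 → 0 ≤ star v ⬝ᵥ (A *ᵥ v) → v = 0 := by
    intro v hxv hge
    have hvx : star v ⬝ᵥ x = 0 := by
      rw [← hconj x v, hxv, star_zero]
    have hq : star v ⬝ᵥ (A *ᵥ v) = - (star v ⬝ᵥ (X *ᵥ v)) := by
      rw [hquad v, hvx, zero_mul, zero_sub]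
    have hXv0 : X *ᵥ v = 0 := by
      have h1 : 0 ≤ star v ⬝ᵥ (X *ᵥ v) := hX.dotProduct_mulVec_nonneg v
      have h2 : star v ⬝ᵥ (X *ᵥ v) ≤ 0 := by
        rw [hq] at hge
        exact neg_nonneg.mp hge
      exact (hX.dotProduct_mulVec_zero_iff v).mp (le_antisymm h2 h1)
    rcases hcase with ⟨hPD, -⟩ | ⟨hrank, hxr⟩
    · by_contra hv
      have := hPD.dotProduct_mulVec_pos hv
      rw [hXv0, dotProduct_zero] at this
      exact lt_irrefl _ this
    · -- rank n-1 case : range X ⊔ span x = ⊤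
      have hfr : Module.finrank ℂ (LinearMap.range X.mulVecLin) = n - 1 := hrank
      have hdisj : LinearMap.range X.mulVecLin ⊓ Submodule.span ℂ {x} = ⊥ := by
        rw [Submodule.eq_bot_iff]
        rintro z ⟨hzR, hzS⟩
        obtain ⟨c, rfl⟩ := Submodule.mem_span_singleton.mp hzS
        rcases eq_or_ne c 0 with rfl | hc
        · simp
        · exfalso
          apply hxr
          have : x = c⁻¹ • (c • x) := by rw [smul_smul, inv_mul_cancel₀ hc, one_smul]
          rw [this]
          exact Submodule.smul_mem _ _ hzR
      have htop : LinearMap.range X.mulVecLin ⊔ Submodule.span ℂ {x} = ⊤ := by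
        apply Submodule.eq_top_of_finrank_eq
        have h1 := Submodule.finrank_sup_add_finrank_inf_eq
          (LinearMap.range X.mulVecLin) (Submodule.span ℂ {x})
        rw [hdisj, finrank_bot, add_zero, hfr, finrank_span_singleton hx] at h1
        rw [h1, Module.finrank_fin_fun]
        omega
      have hmem : v ∈ LinearMap.range X.mulVecLin ⊔ Submodule.span ℂ {x} := by
        rw [htop]; trivial
      obtain ⟨u, hu, z, hz, huz⟩ := Submodule.mem_sup.mp hmem
      obtain ⟨c, rfl⟩ := Submodule.mem_span_singleton.mp hz
      obtain ⟨w0, hw0⟩ := hu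
      have hvu : star v ⬝ᵥ u = 0 := by
        rw [← hw0, mulVecLin_apply, dotProduct_mulVec]
        have hzero : star v ᵥ* X = 0 := by
          have h := star_mulVec X v
          rw [hX.1.eq] at h
          rw [← h, hXv0, star_zero]
        rw [hzero, zero_dotProduct]
      have hvc : star v ⬝ᵥ (c • x) = 0 := by
        rw [dotProduct_smul, hvx, smul_zero]
      have hzero : star v ⬝ᵥ v = 0 := by
        have h1 : star v ⬝ᵥ v = star v ⬝ᵥ u + star v ⬝ᵥ (c • x) := by
          rw [← dotProduct_add, huz]
        rw [h1, hvu, hvc, add_zero]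
      exact dotProduct_star_self_eq_zero.mp hzero
  -- existence of a vector with positive Rayleigh quotient
  have hposvec : ∃ w : Fin n → ℂ, 0 < star w ⬝ᵥ (A *ᵥ w) := by
    rcases hcase with ⟨-, t, v, ht, hv, heq⟩ | ⟨hrank, hxr⟩
    · refine ⟨v, ?_⟩
      rw [heq, dotProduct_smul, smul_eq_mul]
      exact mul_pos (Complex.zero_lt_real.mpr ht) (hself v hv)
    · -- a nonzero kernel vector
      have hfr : Module.finrank ℂ (LinearMap.range X.mulVecLin) = n - 1 := hrank
      have hkr : Module.finrank ℂ (LinearMap.ker X.mulVecLin) = 1 := by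
        have h := LinearMap.finrank_range_add_finrank_ker X.mulVecLin
        rw [hfr, Module.finrank_fin_fun] at h
        omega
      have hne : LinearMap.ker X.mulVecLin ≠ ⊥ := by
        intro h
        rw [h, finrank_bot] at hkr
        omega
      obtain ⟨w, hwmem, hw0⟩ := Submodule.ne_bot_iff _ |>.mp hne
      have hXw : X *ᵥ w = 0 := by
        have := LinearMap.mem_ker.mp hwmem
        rwa [mulVecLin_apply] at this
      refine ⟨w, ?_⟩
      have hc : star x ⬝ᵥ w ≠ 0 := by
        intro h0
        apply hw0
        apply main w h0
        rw [hquad, hXw, dotProduct_zero, sub_zero, h0, mul_zero]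
      rw [hquad, hXw, dotProduct_zero, sub_zero, ← hconj x w, Complex.star_def,
        ← Complex.normSq_eq_conj_mul_self]
      exact Complex.zero_lt_real.mpr (Complex.normSq_pos.mpr hc)
  -- existence of a positive eigenvalue
  have hex : ∃ i, 0 < hA.eigenvalues i := by
    by_contra hno
    push_neg at hno
    have hnsd : (-A).PosSemidef := by
      have hneg : (-A) = (hA.eigenvectorUnitary : Matrix (Fin n) (Fin n) ℂ) *
          diagonal (fun i => -((hA.eigenvalues i : ℝ) : ℂ)) *
          (star (hA.eigenvectorUnitary : Matrix (Fin n) (Fin n) ℂ)) := by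
        conv_lhs => rw [hA.spectral_theorem]
        have hdiag : diagonal (fun i => -((hA.eigenvalues i : ℝ) : ℂ))
            = -diagonal (RCLike.ofReal ∘ hA.eigenvalues) := by
          ext k l
          by_cases h : k = l <;> simp [Matrix.diagonal_apply, h]
        rw [hdiag, Matrix.mul_neg, Matrix.neg_mul, Unitary.conjStarAlgAut_apply]
      rw [hneg]
      refine (posSemidef_diagonal_iff.mpr ?_).mul_mul_conjTranspose_same _
      intro i
      rw [le_neg, neg_zero]
      exact Complex.real_le_real.mpr (hno i)
    obtain ⟨w, hw⟩ := hposvec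
    have h1 := hnsd.dotProduct_mulVec_nonneg w
    rw [neg_mulVec, dotProduct_neg] at h1
    have h2 : star w ⬝ᵥ (A *ᵥ w) ≤ 0 := neg_nonneg.mp h1
    exact absurd (lt_of_lt_of_le hw h2) (lt_irrefl 0)
  -- orthonormality of the eigenbasis
  have horth : ∀ i j, star ⇑(hA.eigenvectorBasis i) ⬝ᵥ ⇑(hA.eigenvectorBasis j)
      = if i = j then 1 else 0 := by
    intro i j
    rw [dotProduct_comm]
    exact orthonormal_iff_ite.mp hA.eigenvectorBasis.orthonormal i j
  have hray : ∀ j, star ⇑(hA.eigenvectorBasis j) ⬝ᵥ (A *ᵥ ⇑(hA.eigenvectorBasis j))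
      = ((hA.eigenvalues j : ℝ) : ℂ) := by
    intro j
    rw [hA.mulVec_eigenvectorBasis, dotProduct_smul, horth j j, if_pos rfl]
    simp [Complex.real_smul]
  have hbne : ∀ i, ⇑(hA.eigenvectorBasis i) ≠ (0 : Fin n → ℂ) := by
    intro i h
    have := horth i i
    rw [if_pos rfl, h] at this
    simp at this
  have hxb : ∀ i, 0 ≤ hA.eigenvalues i → star x ⬝ᵥ ⇑(hA.eigenvectorBasis i) ≠ 0 := by
    intro i hi h0
    exact hbne i (main _ h0 (by rw [hray i]; exact Complex.zero_le_real.mpr hi))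
  -- uniqueness of the nonnegative eigenvalue
  have huniq : ∀ i j, 0 ≤ hA.eigenvalues i → 0 ≤ hA.eigenvalues j → i = j := by
    intro i j hi hj
    by_contra hij
    set p := star x ⬝ᵥ ⇑(hA.eigenvectorBasis i) with hp
    set q := star x ⬝ᵥ ⇑(hA.eigenvectorBasis j) with hq
    set v : Fin n → ℂ := q • ⇑(hA.eigenvectorBasis i) - p • ⇑(hA.eigenvectorBasis j) with hv
    have hxv : star x ⬝ᵥ v = 0 := by
      rw [hv, dotProduct_sub, dotProduct_smul, dotProduct_smul, ← hp, ← hq,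
        smul_eq_mul, smul_eq_mul]
      ring
    have hAv : A *ᵥ v = (q * (hA.eigenvalues i : ℂ)) • ⇑(hA.eigenvectorBasis i)
        - (p * (hA.eigenvalues j : ℂ)) • ⇑(hA.eigenvectorBasis j) := by
      rw [hv, mulVec_sub, mulVec_smul, mulVec_smul, hA.mulVec_eigenvectorBasis,
        hA.mulVec_eigenvectorBasis]
      ext k
      simp [Complex.real_smul]
      ring
    have hform : star v ⬝ᵥ (A *ᵥ v) = (hA.eigenvalues i : ℂ) * (star q * q)
        + (hA.eigenvalues j : ℂ) * (star p * p) := by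
      rw [hAv, hv]
      simp only [star_sub, star_smul, sub_dotProduct, dotProduct_sub, smul_dotProduct,
        dotProduct_smul, smul_eq_mul, horth, hij, Ne.symm hij, if_false, ite_false,
        if_true, ite_true, mul_one, mul_zero, sub_zero, zero_sub, if_pos rfl]
      ring
    have hge : 0 ≤ star v ⬝ᵥ (A *ᵥ v) := by
      rw [hform]
      apply add_nonneg
      · apply mul_nonneg (Complex.zero_le_real.mpr hi)
        rw [show star q = (starRingEnd ℂ) q from rfl, ← Complex.normSq_eq_conj_mul_self]
        exact Complex.zero_le_real.mpr (Complex.normSq_nonneg _)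
      · apply mul_nonneg (Complex.zero_le_real.mpr hj)
        rw [show star p = (starRingEnd ℂ) p from rfl, ← Complex.normSq_eq_conj_mul_self]
        exact Complex.zero_le_real.mpr (Complex.normSq_nonneg _)
    have hv0 : v = 0 := main v hxv hge
    have : q = 0 := by
      have h1 : star ⇑(hA.eigenvectorBasis i) ⬝ᵥ v = q := by
        rw [hv, dotProduct_sub, dotProduct_smul, dotProduct_smul, horth i i,
          horth i j, if_pos rfl, if_neg hij]
        simp
      rw [hv0, dotProduct_zero] at h1
      exact h1.symm
    exact hxb j hj this
  -- final counting
  obtain ⟨i₀, hi₀⟩ := hex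
  have hpos_eq : (Finset.univ.filter fun i => 0 < hA.eigenvalues i) = {i₀} := by
    ext i
    simp only [Finset.mem_filter, Finset.mem_univ, true_and, Finset.mem_singleton]
    constructor
    · intro h
      exact huniq i i₀ h.le hi₀.le
    · rintro rfl
      exact hi₀
  have hneg_eq : (Finset.univ.filter fun i => hA.eigenvalues i < 0)
      = Finset.univ.erase i₀ := by
    ext i
    simp only [Finset.mem_filter, Finset.mem_univ, true_and, Finset.mem_erase, and_true]
    constructor
    · intro h
      rintro rfl
      exact absurd hi₀ (not_lt.mpr h.le)
    · intro hne
      by_contra hnlt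
      push_neg at hnlt
      exact hne (huniq i i₀ hnlt hi₀.le)
  constructor
  · rw [hpos_eq, Finset.card_singleton]
  · rw [hneg_eq, Finset.card_erase_of_mem (Finset.mem_univ i₀), Finset.card_univ,
      Fintype.card_fin]
end

section
/- Let D be an n×n Hermitian matrix with exactly one positive eigenvalue and n − 1 negative eigenvalues (counted with multiplicity). Then every n×n Hermitian positive semidefinite matrix X such that X D X is positive semidefinite has rank at most one. -/
open Matrix
open scoped ComplexOrder

/-- If the Hermitian matrix `D` has exactly one positive
eigenvalue and `n − 1` negative eigenvalues (with multiplicity), then every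
Hermitian PSD matrix `X` with `X D X ⪰ 0` has rank at most one. -/
theorem stmt_19 (n : ℕ) (D : Matrix (Fin n) (Fin n) ℂ) (hD : D.IsHermitian)
    (h1 : (Finset.univ.filter fun i => 0 < hD.eigenvalues i).card = 1)
    (h2 : (Finset.univ.filter fun i => hD.eigenvalues i < 0).card = n - 1)
    (X : Matrix (Fin n) (Fin n) ℂ) (hX : X.PosSemidef)
    (hXDX : (X * D * X).PosSemidef) :
    X.rank ≤ 1 := by
  classical
  by_contra hrk
  push_neg at hrk
  -- the unique positive index
  obtain ⟨i₀, hi₀⟩ := Finset.card_eq_one.mp h1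
  have hn : 1 ≤ n := i₀.pos
  -- all other eigenvalues are negative
  have hneg : ∀ i, i ≠ i₀ → hD.eigenvalues i < 0 := by
    intro i hi
    by_contra hle
    push_neg at hle
    have hdisj : Disjoint (Finset.univ.filter fun i => 0 < hD.eigenvalues i)
        (Finset.univ.filter fun i => hD.eigenvalues i < 0) := by
      refine Finset.disjoint_left.mpr ?_
      intro j hj1 hj2
      simp only [Finset.mem_filter] at hj1 hj2
      exact absurd (hj1.2.trans hj2.2) (lt_irrefl _)
    have hcard : ((Finset.univ.filter fun i => 0 < hD.eigenvalues i) ∪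
        (Finset.univ.filter fun i => hD.eigenvalues i < 0)).card = n := by
      rw [Finset.card_union_of_disjoint hdisj, h1, h2]
      omega
    have huniv : ((Finset.univ.filter fun i => 0 < hD.eigenvalues i) ∪
        (Finset.univ.filter fun i => hD.eigenvalues i < 0)) = Finset.univ := by
      apply Finset.eq_univ_of_card
      simpa using hcard
    have hi' : i ∈ ((Finset.univ.filter fun i => 0 < hD.eigenvalues i) ∪
        (Finset.univ.filter fun i => hD.eigenvalues i < 0)) := by
      rw [huniv]; exact Finset.mem_univ i
    rcases Finset.mem_union.mp hi' with h | h
    · rw [hi₀] at h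
      exact hi (Finset.mem_singleton.mp h)
    · simp only [Finset.mem_filter] at h
      exact absurd hle (not_le.mpr h.2)
  -- diagonalize
  set U : Matrix (Fin n) (Fin n) ℂ := (hD.eigenvectorUnitary : Matrix (Fin n) (Fin n) ℂ) with hUdef
  set Dd : Matrix (Fin n) (Fin n) ℂ := Matrix.diagonal (RCLike.ofReal ∘ hD.eigenvalues) with hDddef
  have hspec : star U * D * U = Dd := by
    have := hD.conjStarAlgAut_star_eigenvectorUnitary
    simpa only [Unitary.conjStarAlgAut_apply, Unitary.coe_star, star_star] using this
  have hUunit : IsUnit U := ⟨Unitary.toUnits hD.eigenvectorUnitary, rfl⟩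
  have hUU : U * star U = 1 := Matrix.mem_unitaryGroup_iff.mp hD.eigenvectorUnitary.2
  set Y : Matrix (Fin n) (Fin n) ℂ := star U * X * U with hYdef
  have hY : Y.PosSemidef := by
    have := hX.conjTranspose_mul_mul_same U
    simpa [Matrix.star_eq_conjTranspose, hYdef] using this
  have hmulUU : ∀ M : Matrix (Fin n) (Fin n) ℂ, U * (star U * M) = M := by
    intro M; rw [← Matrix.mul_assoc, hUU, Matrix.one_mul]
  have hYDY : (Y * Dd * Y).PosSemidef := by
    have heq : Y * Dd * Y = star U * (X * D * X) * U := by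
      rw [← hspec, hYdef]
      simp only [Matrix.mul_assoc, hmulUU]
    have := hXDX.conjTranspose_mul_mul_same U
    rw [heq]
    simpa [Matrix.star_eq_conjTranspose] using this
  -- rank of Y equals rank of X
  have hdetU : IsUnit U.det := (Matrix.isUnit_iff_isUnit_det U).mp hUunit
  have hdetsU : IsUnit (star U).det := (Matrix.isUnit_iff_isUnit_det (star U)).mp hUunit.star
  have hrkY : Y.rank = X.rank := by
    rw [hYdef, Matrix.rank_mul_eq_left_of_isUnit_det U (star U * X) hdetU,
      Matrix.rank_mul_eq_right_of_isUnit_det (star U) X hdetsU]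
  -- find a nonzero v in range of Y with v i₀ = 0
  have hrk2 : 2 ≤ Module.finrank ℂ (LinearMap.range Y.mulVecLin) := by
    rw [← Matrix.rank, hrkY]; omega
  set V := LinearMap.range Y.mulVecLin with hVdef
  set φ : V →ₗ[ℂ] ℂ := (LinearMap.proj i₀).comp V.subtype with hφdef
  have hker : 0 < Module.finrank ℂ (LinearMap.ker φ) := by
    have h1' := LinearMap.finrank_range_add_finrank_ker φ
    have h2' : Module.finrank ℂ (LinearMap.range φ) ≤ 1 := by
      simpa using (LinearMap.range φ).finrank_le
    omega
  have : Nontrivial (LinearMap.ker φ) := Module.finrank_pos_iff.mp hker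
  obtain ⟨w, hw⟩ := exists_ne (0 : LinearMap.ker φ)
  obtain ⟨u, hu⟩ := w.1.2
  set v : Fin n → ℂ := Y *ᵥ u with hvdef
  have hvval : v = (w.1 : Fin n → ℂ) := hu
  have hv0 : v ≠ 0 := by
    rw [hvval]
    intro h
    apply hw
    apply Subtype.ext
    apply Subtype.ext
    exact h
  have hvi₀ : v i₀ = 0 := by
    have := w.2
    rw [LinearMap.mem_ker] at this
    rw [hvval]
    exact this
  -- compute the quadratic form
  have hpos : 0 ≤ star u ⬝ᵥ ((Y * Dd * Y) *ᵥ u) := hYDY.dotProduct_mulVec_nonneg u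
  have hkey : star u ⬝ᵥ ((Y * Dd * Y) *ᵥ u) = star v ⬝ᵥ (Dd *ᵥ v) := by
    rw [Matrix.mul_assoc, ← Matrix.mulVec_mulVec, Matrix.dotProduct_mulVec, hvdef,
      Matrix.star_mulVec, hY.1, Matrix.mulVec_mulVec]
  have hsum : star v ⬝ᵥ (Dd *ᵥ v) =
      ∑ i, ((hD.eigenvalues i * Complex.normSq (v i) : ℝ) : ℂ) := by
    rw [dotProduct]
    apply Finset.sum_congr rfl
    intro i _
    simp only [hDddef, Matrix.mulVec_diagonal, Pi.star_apply, Function.comp_apply,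
      RCLike.star_def]
    rw [show (RCLike.ofReal (hD.eigenvalues i) : ℂ) = ((hD.eigenvalues i : ℝ) : ℂ) from rfl,
      Complex.ofReal_mul, ← Complex.mul_conj]
    ring
  have hlt : star v ⬝ᵥ (Dd *ᵥ v) < 0 := by
    rw [hsum]
    obtain ⟨j, hj⟩ := Function.ne_iff.mp hv0
    have hjne : j ≠ i₀ := fun h => hj (h ▸ hvi₀)
    have : ∑ i, ((hD.eigenvalues i * Complex.normSq (v i) : ℝ) : ℂ) <
        ∑ _i : Fin n, (0 : ℂ) := by
      apply Finset.sum_lt_sum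
      · intro i _
        by_cases hi : i = i₀
        · subst hi; rw [hvi₀]; simp
        · have h1' := hneg i hi
          have h2' : (0 : ℝ) ≤ Complex.normSq (v i) := Complex.normSq_nonneg _
          have : hD.eigenvalues i * Complex.normSq (v i) ≤ 0 :=
            mul_nonpos_of_nonpos_of_nonneg h1'.le h2'
          exact_mod_cast Complex.real_le_real.mpr this
      · refine ⟨j, Finset.mem_univ j, ?_⟩
        have h1' := hneg j hjne
        have h2' : (0 : ℝ) < Complex.normSq (v j) := by
          simpa [Complex.normSq_pos] using hj
        have : hD.eigenvalues j * Complex.normSq (v j) < 0 :=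
          mul_neg_of_neg_of_pos h1' h2'
        exact_mod_cast Complex.real_lt_real.mpr this
    simpa using this
  rw [hkey] at hpos
  exact absurd hpos hlt.not_ge
end
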